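/- arXiv:1909.04439 — 4 statements merged into one kernel-verified Lean document; each statement's English description precedes it below -/
import Mathlib

section
/- Let x be a collision-free solution of the first-order singular Cucker–Smale system with β > 1. Then there exists a constant C_m > 0 such that min_{i ≠ j} |x_i(t) − x_j(t)| ≥ C_m for all t ≥ 0; i.e., the relative distances between particles admit a uniform-in-time positive lower bound. -/
open Real Filter Set Topology

/-- The potential function `Φ(x) = sign(x)·(β−1)⁻¹(1 − |x|^{1−β})` (with `Φ(0)=0`). -/
noncomputable def PhiCS (β y : ℝ) : ℝ := Real.sign y * (1 - |y| ^ (1 - β)) / (β - 1)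

lemma PhiCS_of_pos {β y : ℝ} (hy : 0 < y) : PhiCS β y = (1 - y ^ (1 - β)) / (β - 1) := by
  simp [PhiCS, Real.sign_of_pos hy, abs_of_pos hy]

lemma PhiCS_neg (β y : ℝ) : PhiCS β (-y) = -PhiCS β y := by
  simp [PhiCS, Real.sign_neg, abs_neg]
  ring

/-- monotonicity of `w ↦ (w+d)^(1-β) - w^(1-β)` on `(0,∞)`. -/
lemma F_mono {β d : ℝ} (hβ : 1 < β) (hd : 0 < d) :
    MonotoneOn (fun w : ℝ => (w + d) ^ (1 - β) - w ^ (1 - β)) (Ioi 0) := by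
  have hderiv : ∀ w : ℝ, 0 < w →
      HasDerivAt (fun w : ℝ => (w + d) ^ (1 - β) - w ^ (1 - β))
        ((1 - β) * ((w + d) ^ (-β) - w ^ (-β))) w := by
    intro w hw
    have hwd : 0 < w + d := by linarith
    have h1 : HasDerivAt (fun w : ℝ => (w + d) ^ (1 - β))
        (1 * (1 - β) * (w + d) ^ (1 - β - 1)) w :=
      (HasDerivAt.rpow_const ((hasDerivAt_id w).add_const d) (Or.inl hwd.ne'))
    have h2 : HasDerivAt (fun w : ℝ => w ^ (1 - β)) ((1 - β) * w ^ (1 - β - 1)) w :=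
      Real.hasDerivAt_rpow_const (Or.inl hw.ne')
    have h3 := h1.sub h2
    have h4 : 1 - β - 1 = -β := by ring
    exact h3.congr_deriv (by rw [h4]; ring)
  apply monotoneOn_of_deriv_nonneg (convex_Ioi 0)
  · intro w hw
    exact ((hderiv w hw).continuousAt).continuousWithinAt
  · intro w hw
    rw [interior_Ioi] at hw
    exact (hderiv w hw).differentiableAt.differentiableWithinAt
  · intro w hw
    rw [interior_Ioi] at hw
    rw [(hderiv w hw).deriv]
    have hw' : (0:ℝ) < w := hw
    have hwd : 0 < w + d := by linarith
    have h1 : (w + d) ^ (-β) ≤ w ^ (-β) :=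
      Real.rpow_le_rpow_of_nonpos hw' (by linarith) (by linarith)
    nlinarith [h1]

/-- telescoping lower bound on one side. -/
lemma side_sum {β : ℝ} (hβ : 1 < β) {d : ℝ} (hd : 0 < d) :
    ∀ (n : ℕ) (S : Finset ℝ) (m : ℕ), S.card = n → 1 ≤ m →
    (∀ w ∈ S, (m : ℝ) * d ≤ w) → (∀ w ∈ S, ∀ v ∈ S, w ≠ v → d ≤ |w - v|) →
    d ^ (1 - β) * ((((m : ℝ) + n) ^ (1 - β) - (m : ℝ) ^ (1 - β)) / (β - 1)) ≤
      ∑ w ∈ S, (PhiCS β w - PhiCS β (w + d)) := by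
  have hβ1 : (0:ℝ) < β - 1 := by linarith
  intro n
  induction n with
  | zero =>
    intro S m hcard _ _ _
    rw [Finset.card_eq_zero] at hcard
    subst hcard
    simp
  | succ n ih =>
    intro S m hcard hm hlow hpair
    have hSne : S.Nonempty := Finset.card_pos.mp (by omega)
    set w0 := S.min' hSne with hw0
    have hw0S : w0 ∈ S := S.min'_mem hSne
    have hmd : (0:ℝ) < (m:ℝ) * d := by
      have : (1:ℝ) ≤ (m:ℝ) := by exact_mod_cast hm
      nlinarith
    have hw0pos : 0 < w0 := lt_of_lt_of_le hmd (hlow _ hw0S)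
    set S' := S.erase w0 with hS'
    have hcard' : S'.card = n := by
      rw [hS', Finset.card_erase_of_mem hw0S, hcard]
      omega
    have hlow' : ∀ w ∈ S', ((m + 1 : ℕ) : ℝ) * d ≤ w := by
      intro w hw
      have hwS : w ∈ S := Finset.mem_of_mem_erase hw
      have hne : w ≠ w0 := Finset.ne_of_mem_erase hw
      have h1 : w0 ≤ w := S.min'_le w hwS
      have h2 : d ≤ |w - w0| := hpair w hwS w0 hw0S hne
      have h3 : w0 + d ≤ w := by
        rw [abs_of_nonneg (by linarith)] at h2; linarith
      have h4 : (m : ℝ) * d ≤ w0 := hlow _ hw0S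
      push_cast
      linarith
    have hpair' : ∀ w ∈ S', ∀ v ∈ S', w ≠ v → d ≤ |w - v| := fun w hw v hv =>
      hpair w (Finset.mem_of_mem_erase hw) v (Finset.mem_of_mem_erase hv)
    have hrest := ih S' (m + 1) hcard' (by omega) hlow' hpair'
    -- bound on the minimal term
    have hterm : d ^ (1 - β) * ((((m : ℝ) + 1) ^ (1 - β) - (m : ℝ) ^ (1 - β)) / (β - 1)) ≤
        PhiCS β w0 - PhiCS β (w0 + d) := by
      have hw0d : 0 < w0 + d := by linarith
      rw [PhiCS_of_pos hw0pos, PhiCS_of_pos hw0d]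
      have hmono := F_mono (d := d) hβ hd (Set.mem_Ioi.mpr hmd)
        (Set.mem_Ioi.mpr hw0pos) (hlow _ hw0S)
      simp only at hmono
      have hmul1 : ((m : ℝ) * d) ^ (1 - β) = (m : ℝ) ^ (1 - β) * d ^ (1 - β) :=
        Real.mul_rpow (by positivity) hd.le
      have hmul2 : ((m : ℝ) * d + d) ^ (1 - β) = ((m : ℝ) + 1) ^ (1 - β) * d ^ (1 - β) := by
        have h5 : (m : ℝ) * d + d = ((m : ℝ) + 1) * d := by ring
        rw [h5, Real.mul_rpow (by positivity) hd.le]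
      have key : d ^ (1 - β) * (((m : ℝ) + 1) ^ (1 - β) - (m : ℝ) ^ (1 - β)) ≤
          (w0 + d) ^ (1 - β) - w0 ^ (1 - β) := by
        rw [hmul1, hmul2] at hmono
        linarith
      have hc : (0:ℝ) ≤ (β - 1)⁻¹ := by positivity
      have hmm := mul_le_mul_of_nonneg_right key hc
      calc d ^ (1 - β) * ((((m : ℝ) + 1) ^ (1 - β) - (m : ℝ) ^ (1 - β)) / (β - 1))
          = d ^ (1 - β) * (((m : ℝ) + 1) ^ (1 - β) - (m : ℝ) ^ (1 - β)) * (β - 1)⁻¹ := by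
            rw [div_eq_mul_inv]; ring
        _ ≤ ((w0 + d) ^ (1 - β) - w0 ^ (1 - β)) * (β - 1)⁻¹ := hmm
        _ = (1 - w0 ^ (1 - β)) / (β - 1) - (1 - (w0 + d) ^ (1 - β)) / (β - 1) := by
            rw [div_eq_mul_inv, div_eq_mul_inv]; ring
    -- assemble
    have hsplit : ∑ w ∈ S, (PhiCS β w - PhiCS β (w + d)) =
        (PhiCS β w0 - PhiCS β (w0 + d)) + ∑ w ∈ S', (PhiCS β w - PhiCS β (w + d)) :=
      (Finset.add_sum_erase S _ hw0S).symm
    rw [hsplit]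
    have htel : d ^ (1 - β) * ((((m : ℝ) + (n+1:ℕ)) ^ (1 - β) - (m : ℝ) ^ (1 - β)) / (β - 1)) =
        d ^ (1 - β) * ((((m : ℝ) + 1) ^ (1 - β) - (m : ℝ) ^ (1 - β)) / (β - 1)) +
        d ^ (1 - β) * (((((m+1:ℕ) : ℝ) + n) ^ (1 - β) - ((m+1:ℕ) : ℝ) ^ (1 - β)) / (β - 1)) := by
      push_cast
      have h7 : (m : ℝ) + (n + 1) = (m : ℝ) + 1 + n := by ring
      rw [h7]
      ring
    rw [htel]
    exact add_le_add hterm hrest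

lemma key_pos {N : ℕ} (hN : 2 ≤ N) {β κ : ℝ} (hβ : 1 < β) (hκ : 0 < κ)
    (ν : Fin N → ℝ) (z : Fin N → ℝ) (i j : Fin N) (hij : i ≠ j)
    (hd : 0 < z j - z i)
    (hmin : ∀ k l, k ≠ l → z j - z i ≤ |z k - z l|)
    (hsmall : (N:ℝ) ^ (β-1) * (1 + (∑ p, |ν p|) * N * (β-1) / (2*κ)) < (z j - z i) ^ (1 - β)) :
    0 < (ν j + κ / N * ∑ k ∈ Finset.univ.erase j, PhiCS β (z k - z j))
      - (ν i + κ / N * ∑ k ∈ Finset.univ.erase i, PhiCS β (z k - z i)) := by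
  classical
  have hβ1 : (0:ℝ) < β - 1 := by linarith
  have hNpos : (0:ℝ) < N := by positivity
  set d := z j - z i with hddef
  set M := ∑ p, |ν p| with hM
  set E := (Finset.univ.erase j).erase i with hE
  have hijmem : i ∈ Finset.univ.erase j := by simp [Finset.mem_erase, hij]
  have hEcard : E.card = N - 2 := by
    rw [hE, Finset.card_erase_of_mem hijmem, Finset.card_erase_of_mem (Finset.mem_univ j)]
    simp only [Finset.card_univ, Fintype.card_fin]
    omega
  -- split the two sums
  have hsum1 : ∑ k ∈ Finset.univ.erase j, PhiCS β (z k - z j)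
      = PhiCS β (z i - z j) + ∑ k ∈ E, PhiCS β (z k - z j) := by
    rw [hE]
    exact (Finset.add_sum_erase _ _ hijmem).symm
  have hsum2 : ∑ k ∈ Finset.univ.erase i, PhiCS β (z k - z i)
      = PhiCS β (z j - z i) + ∑ k ∈ E, PhiCS β (z k - z i) := by
    rw [hE, Finset.erase_right_comm]
    exact (Finset.add_sum_erase _ _ (by simp [Finset.mem_erase, Ne.symm hij])).symm
  -- classification of outside particles
  have hside : ∀ k ∈ E, z j < z k ∨ z k < z i := by
    intro k hk
    have hki : k ≠ i := Finset.ne_of_mem_erase hk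
    have hkj : k ≠ j := Finset.ne_of_mem_erase (Finset.mem_of_mem_erase hk)
    rcases lt_trichotomy (z k) (z i) with h | h | h
    · exact Or.inr h
    · exfalso
      have h1 := hmin k i hki
      rw [h] at h1
      simp at h1
      linarith
    · left
      have h1 : d ≤ |z k - z i| := hmin k i hki
      rw [abs_of_pos (by linarith)] at h1
      have h2 : z j ≤ z k := by linarith
      rcases eq_or_lt_of_le h2 with h3 | h3
      · exfalso
        have h4 := hmin k j hkj
        rw [← h3] at h4
        simp at h4
        linarith
      · exact h3
  set R := E.filter (fun k => z j < z k) with hR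
  set L := E.filter (fun k => ¬ z j < z k) with hL
  have hLlt : ∀ k ∈ L, z k < z i := by
    intro k hk
    rw [hL, Finset.mem_filter] at hk
    rcases hside k hk.1 with h | h
    · exact absurd h hk.2
    · exact h
  have hRlt : ∀ k ∈ R, z j < z k := by
    intro k hk
    rw [hR, Finset.mem_filter] at hk
    exact hk.2
  have hRE : ∀ k ∈ R, k ∈ E := fun k hk => Finset.mem_of_mem_filter k hk
  have hLE : ∀ k ∈ L, k ∈ E := fun k hk => Finset.mem_of_mem_filter k hk
  have hzinj : ∀ k l : Fin N, z k = z l → k = l := by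
    intro k l h
    by_contra hne
    have h1 := hmin k l hne
    rw [h] at h1
    simp at h1
    linarith
  have hp : (1:ℝ) - β ≤ 0 := by linarith
  have hcard_aux : ∀ (s : Finset (Fin N)), s ⊆ E → (1:ℝ) + s.card ≤ N := by
    intro s hs
    have h1 : s.card ≤ E.card := Finset.card_le_card hs
    have h2 : s.card + 1 ≤ N := by omega
    have h3 : ((s.card:ℝ)) + 1 ≤ N := by exact_mod_cast h2
    linarith
  -- one-sided estimate, abstract
  have hside_bound : ∀ (s : Finset (Fin N)) (f : Fin N → ℝ), s ⊆ E →
      (∀ k ∈ s, d ≤ f k) → (∀ k ∈ s, ∀ l ∈ s, |f k - f l| = |z k - z l|) →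
      d ^ (1-β) * (((N:ℝ) ^ (1-β) - 1) / (β-1)) ≤
        ∑ k ∈ s, (PhiCS β (f k) - PhiCS β (f k + d)) := by
    intro s f hs hlow hdiff
    have hfinj : ∀ k ∈ s, ∀ l ∈ s, f k = f l → k = l := by
      intro k hk l hl h
      have h1 := hdiff k hk l hl
      rw [h, sub_self, abs_zero] at h1
      exact hzinj k l (by have := abs_eq_zero.mp h1.symm; linarith)
    set S : Finset ℝ := s.image f with hS
    have hcardS : S.card = s.card := Finset.card_image_of_injOn (fun k hk l hl => hfinj k hk l hl)
    have hsum_img : ∑ w ∈ S, (PhiCS β w - PhiCS β (w + d)) =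
        ∑ k ∈ s, (PhiCS β (f k) - PhiCS β (f k + d)) := Finset.sum_image hfinj
    have hlowS : ∀ w ∈ S, ((1:ℕ):ℝ) * d ≤ w := by
      intro w hw
      rw [hS, Finset.mem_image] at hw
      obtain ⟨k, hk, rfl⟩ := hw
      simpa using hlow k hk
    have hpairS : ∀ w ∈ S, ∀ v ∈ S, w ≠ v → d ≤ |w - v| := by
      intro w hw v hv hne
      rw [hS, Finset.mem_image] at hw hv
      obtain ⟨k, hk, rfl⟩ := hw
      obtain ⟨l, hl, rfl⟩ := hv
      have hkl : k ≠ l := fun h => hne (by rw [h])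
      rw [hdiff k hk l hl]
      exact hmin k l hkl
    have hmain := side_sum hβ hd S.card S 1 rfl le_rfl hlowS hpairS
    rw [hsum_img] at hmain
    refine le_trans ?_ hmain
    have h1 : ((N:ℝ)) ^ (1-β) ≤ ((1:ℝ) + S.card) ^ (1-β) := by
      apply Real.rpow_le_rpow_of_nonpos (by positivity) ?_ hp
      rw [hcardS]
      exact hcard_aux s hs
    have h2 : ((1:ℕ):ℝ) ^ (1-β) = 1 := by
      norm_num
    rw [h2]
    push_cast
    gcongr
  -- the R sum
  have hRbound : d ^ (1-β) * (((N:ℝ) ^ (1-β) - 1) / (β-1)) ≤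
      ∑ k ∈ R, (PhiCS β (z k - z j) - PhiCS β (z k - z i)) := by
    have hconv : ∀ k ∈ R, PhiCS β (z k - z j) - PhiCS β (z k - z i)
        = PhiCS β (z k - z j) - PhiCS β ((z k - z j) + d) := by
      intro k hk
      have : z k - z i = (z k - z j) + d := by rw [hddef]; ring
      rw [this]
    rw [Finset.sum_congr rfl hconv]
    apply hside_bound R (fun k => z k - z j) (Finset.filter_subset _ _)
    · intro k hk
      have hkj : k ≠ j := by
        intro h; rw [h] at hk; exact absurd (hRlt j hk) (lt_irrefl _)
      have h1 := hmin k j hkj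
      rw [abs_of_pos (by linarith [hRlt k hk])] at h1
      exact h1
    · intro k _ l _
      congr 1
      ring
  -- the L sum
  have hLbound : d ^ (1-β) * (((N:ℝ) ^ (1-β) - 1) / (β-1)) ≤
      ∑ k ∈ L, (PhiCS β (z k - z j) - PhiCS β (z k - z i)) := by
    have hconv : ∀ k ∈ L, PhiCS β (z k - z j) - PhiCS β (z k - z i)
        = PhiCS β (z i - z k) - PhiCS β ((z i - z k) + d) := by
      intro k hk
      have e1 : z k - z j = -((z i - z k) + d) := by rw [hddef]; ring
      have e2 : z k - z i = -(z i - z k) := by ring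
      rw [e1, e2, PhiCS_neg, PhiCS_neg]
      ring
    rw [Finset.sum_congr rfl hconv]
    apply hside_bound L (fun k => z i - z k) (Finset.filter_subset _ _)
    · intro k hk
      have hki : i ≠ k := by
        intro h; rw [← h] at hk; exact absurd (hLlt i hk) (lt_irrefl _)
      have h1 := hmin i k hki
      rw [abs_of_pos (by linarith [hLlt k hk])] at h1
      exact h1
    · intro k hk l hl
      rw [show (z i - z k) - (z i - z l) = -(z k - z l) by ring, abs_neg]
  -- pair term
  have hpair_term : PhiCS β (z i - z j) - PhiCS β (z j - z i) = (2 * d ^ (1-β) - 2) / (β-1) := by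
    rw [show z i - z j = -(z j - z i) by ring, PhiCS_neg]
    rw [show z j - z i = d from hddef.symm, PhiCS_of_pos hd]
    ring
  -- total bound on D
  have hEsplit : ∑ k ∈ E, (PhiCS β (z k - z j) - PhiCS β (z k - z i)) =
      ∑ k ∈ R, (PhiCS β (z k - z j) - PhiCS β (z k - z i)) +
      ∑ k ∈ L, (PhiCS β (z k - z j) - PhiCS β (z k - z i)) := by
    rw [hR, hL, Finset.sum_filter_add_sum_filter_not]
  have hD : (2 * d ^ (1-β) * (N:ℝ) ^ (1-β) - 2) / (β-1) ≤
      (∑ k ∈ Finset.univ.erase j, PhiCS β (z k - z j)) -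
      (∑ k ∈ Finset.univ.erase i, PhiCS β (z k - z i)) := by
    rw [hsum1, hsum2]
    have hsub : (PhiCS β (z i - z j) + ∑ k ∈ E, PhiCS β (z k - z j)) -
        (PhiCS β (z j - z i) + ∑ k ∈ E, PhiCS β (z k - z i)) =
        (PhiCS β (z i - z j) - PhiCS β (z j - z i)) +
        ∑ k ∈ E, (PhiCS β (z k - z j) - PhiCS β (z k - z i)) := by
      rw [Finset.sum_sub_distrib]; ring
    rw [hsub, hEsplit]
    have halg : (2 * d ^ (1-β) * (N:ℝ) ^ (1-β) - 2) / (β-1) =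
        (2 * d ^ (1-β) - 2) / (β-1) +
        (d ^ (1-β) * (((N:ℝ) ^ (1-β) - 1) / (β-1)) +
         d ^ (1-β) * (((N:ℝ) ^ (1-β) - 1) / (β-1))) := by
      field_simp
      ring
    rw [halg, hpair_term]
    have := add_le_add hRbound hLbound
    linarith
  -- final arithmetic
  have hnu : -M ≤ ν j - ν i := by
    have h1 : |ν i| + |ν j| ≤ M := by
      have h0 := Finset.sum_le_sum_of_subset_of_nonneg
        (Finset.subset_univ ({i, j} : Finset (Fin N))) (fun p _ _ => abs_nonneg (ν p))
      rw [Finset.sum_pair hij] at h0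
      exact h0
    have h2 : |ν j - ν i| ≤ |ν j| + |ν i| := abs_sub _ _
    have h3 := neg_abs_le (ν j - ν i)
    linarith
  have hAB : 1 + M * N * (β-1) / (2*κ) < d ^ (1-β) * (N:ℝ) ^ (1-β) := by
    have h1 : (0:ℝ) < (N:ℝ) ^ (1-β) := Real.rpow_pos_of_pos hNpos _
    have h2 := mul_lt_mul_of_pos_right hsmall h1
    have h3 : (N:ℝ) ^ (β-1) * (N:ℝ) ^ (1-β) = 1 := by
      rw [← Real.rpow_add hNpos]
      norm_num
    have h5 : (N:ℝ) ^ (β-1) * (1 + M * ↑N * (β-1) / (2*κ)) * (N:ℝ) ^ (1-β)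
        = 1 + M * ↑N * (β-1) / (2*κ) := by
      calc (N:ℝ) ^ (β-1) * (1 + M * ↑N * (β-1) / (2*κ)) * (N:ℝ) ^ (1-β)
          = (1 + M * ↑N * (β-1) / (2*κ)) * ((N:ℝ) ^ (β-1) * (N:ℝ) ^ (1-β)) := by ring
        _ = 1 + M * ↑N * (β-1) / (2*κ) := by rw [h3, mul_one]
    calc 1 + M * N * (β-1) / (2*κ)
        = (N:ℝ) ^ (β-1) * (1 + M * ↑N * (β-1) / (2*κ)) * (N:ℝ) ^ (1-β) := h5.symm
      _ < d ^ (1-β) * (N:ℝ) ^ (1-β) := h2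
  have hMlt : M < κ / N * ((2 * d ^ (1-β) * (N:ℝ) ^ (1-β) - 2) / (β-1)) := by
    have heq : M = κ / N * ((2 * (1 + M * N * (β-1) / (2*κ)) - 2) / (β-1)) := by
      field_simp
      ring
    rw [heq]
    apply mul_lt_mul_of_pos_left ?_ (by positivity : (0:ℝ) < κ / N)
    apply (div_lt_div_iff_of_pos_right hβ1).mpr
    linarith [hAB]
  have hfinal : M < κ / N * ((∑ k ∈ Finset.univ.erase j, PhiCS β (z k - z j)) -
      (∑ k ∈ Finset.univ.erase i, PhiCS β (z k - z i))) := by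
    calc M < κ / N * ((2 * d ^ (1-β) * (N:ℝ) ^ (1-β) - 2) / (β-1)) := hMlt
      _ ≤ _ := mul_le_mul_of_nonneg_left hD (by positivity)
  have hexp : κ / ↑N * (∑ k ∈ Finset.univ.erase j, PhiCS β (z k - z j)) -
      κ / ↑N * (∑ k ∈ Finset.univ.erase i, PhiCS β (z k - z i)) =
      κ / ↑N * ((∑ k ∈ Finset.univ.erase j, PhiCS β (z k - z j)) -
      (∑ k ∈ Finset.univ.erase i, PhiCS β (z k - z i))) := by ring
  linarith [hfinal, hnu, hexp]

/-- A collision-free solution on `[0,∞)` of the first-order singular Cucker–Smale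
system with short-range interaction:
`x_i'(t) = ν_i + (κ/N) Σ_{k≠i} Φ(x_k(t) − x_i(t))`, with `Σ_i x_i(0) = 0` and no
collisions for all `t ≥ 0`. -/
def IsCFSol (N : ℕ) (β κ : ℝ) (ν : Fin N → ℝ) (x : ℝ → Fin N → ℝ) : Prop :=
  (∀ t ≥ (0:ℝ), ∀ i j : Fin N, i ≠ j → x t i ≠ x t j) ∧
  (∑ i, x 0 i = 0) ∧
  ∀ i, ∀ t ≥ (0:ℝ), HasDerivWithinAt (fun s => x s i)
    (ν i + (κ / (N:ℝ)) * ∑ k ∈ Finset.univ.erase i, PhiCS β (x t k - x t i)) (Set.Ici 0) t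

/-- Uniform-in-time positive lower bound on all relative distances when `β > 1`. -/
theorem stmt8 (N : ℕ) (hN : 2 ≤ N) (β κ : ℝ) (hβ : 1 < β) (hκ : 0 < κ)
    (ν : Fin N → ℝ) (hν : ∑ i, ν i = 0)
    (x : ℝ → Fin N → ℝ) (hx : IsCFSol N β κ ν x) :
    ∃ Cm > (0:ℝ), ∀ t ≥ (0:ℝ), ∀ i j : Fin N, i ≠ j → Cm ≤ |x t i - x t j| := by
  classical
  obtain ⟨hsep, -, hderiv⟩ := hx
  have hβ1 : (0:ℝ) < β - 1 := by linarith
  have hNpos : (0:ℝ) < N := by positivity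
  set M := ∑ p, |ν p| with hM
  have hMnn : 0 ≤ M := Finset.sum_nonneg fun p _ => abs_nonneg _
  set T0 : ℝ := (N:ℝ) ^ (β-1) * (1 + M * N * (β-1) / (2*κ)) with hT0
  have hT0pos : 0 < T0 := by positivity
  set δ : ℝ := T0 ^ (1-β)⁻¹ with hδdef
  have hδpos : 0 < δ := Real.rpow_pos_of_pos hT0pos _
  have hδpow : δ ^ (1-β) = T0 := by
    rw [hδdef, ← Real.rpow_mul hT0pos.le,
      inv_mul_cancel₀ (by intro h; rw [sub_eq_zero] at h; linarith : (1:ℝ) - β ≠ 0),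
      Real.rpow_one]
  set P := (Finset.univ.offDiag : Finset (Fin N × Fin N)) with hP
  have hpairs : P.Nonempty := by
    refine ⟨(⟨0, by omega⟩, ⟨1, by omega⟩), Finset.mem_offDiag.mpr
      ⟨Finset.mem_univ _, Finset.mem_univ _, ?_⟩⟩
    simp [Fin.ext_iff]
  have hdistpos : ∀ t ≥ (0:ℝ), ∀ p ∈ P, 0 < |x t p.1 - x t p.2| := by
    intro t ht p hp
    have := hsep t ht p.1 p.2 (Finset.mem_offDiag.mp hp).2.2
    exact abs_pos.mpr (sub_ne_zero.mpr this)
  set d0 := P.inf' hpairs (fun p => |x 0 p.1 - x 0 p.2|) with hd0def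
  have hd0pos : 0 < d0 := by
    obtain ⟨p, hp, hpe⟩ := Finset.exists_mem_eq_inf' hpairs (fun p => |x 0 p.1 - x 0 p.2|)
    rw [hd0def, hpe]
    exact hdistpos 0 le_rfl p hp
  have hmin2 : 0 < min d0 δ := lt_min hd0pos hδpos
  refine ⟨min d0 δ / 2, by linarith, ?_⟩
  intro t ht i0 j0 hij0
  by_contra hcon
  push_neg at hcon
  have hi0j0P : (i0, j0) ∈ P :=
    Finset.mem_offDiag.mpr ⟨Finset.mem_univ _, Finset.mem_univ _, hij0⟩
  have habs_pos : 0 < |x t i0 - x t j0| := hdistpos t ht (i0, j0) hi0j0P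
  set y := (|x t i0 - x t j0| + min d0 δ / 2) / 2 with hy
  have hypos : 0 < y := by rw [hy]; linarith
  have hylt : |x t i0 - x t j0| < y := by rw [hy]; linarith
  have hymin : y < min d0 δ / 2 := by rw [hy]; linarith
  have hyδ : y < δ := by
    have := min_le_right d0 δ
    linarith
  have hyd0 : y < d0 := by
    have := min_le_left d0 δ
    linarith
  set K := {s : ℝ | s ∈ Icc 0 t ∧ ∃ p ∈ P, |x s p.1 - x s p.2| ≤ y} with hK
  have hcont : ∀ p : Fin N × Fin N, ContinuousOn (fun s => |x s p.1 - x s p.2|) (Icc 0 t) := by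
    intro p
    apply ContinuousOn.abs
    apply ContinuousOn.sub
    · exact fun s hs => ((hderiv p.1 s hs.1).continuousWithinAt).mono
        (fun r hr => hr.1)
    · exact fun s hs => ((hderiv p.2 s hs.1).continuousWithinAt).mono
        (fun r hr => hr.1)
  have hKclosed : IsClosed K := by
    have hKeq : K = ⋃ p ∈ (P : Set (Fin N × Fin N)),
        (Icc 0 t ∩ (fun s => |x s p.1 - x s p.2|) ⁻¹' (Iic y)) := by
      ext s
      simp only [hK, Set.mem_setOf_eq, Set.mem_iUnion, Set.mem_inter_iff, Set.mem_preimage,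
        Set.mem_Iic, Finset.mem_coe, exists_prop]
      tauto
    rw [hKeq]
    apply Set.Finite.isClosed_biUnion (P.finite_toSet)
    intro p _
    exact (hcont p).preimage_isClosed_of_isClosed isClosed_Icc isClosed_Iic
  have hKne : K.Nonempty := ⟨t, ⟨⟨ht, le_rfl⟩, ⟨(i0, j0), hi0j0P, hylt.le⟩⟩⟩
  have hKbdd : BddBelow K := ⟨0, fun s hs => hs.1.1⟩
  set u := sInf K with hu
  have huK : u ∈ K := hKclosed.csInf_mem hKne hKbdd
  have hu0 : 0 ≤ u := huK.1.1
  have hut : u ≤ t := huK.1.2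
  have hupos : 0 < u := by
    rcases eq_or_lt_of_le hu0 with h | h
    · exfalso
      obtain ⟨p, hp, hple⟩ := huK.2
      have h1 : d0 ≤ |x 0 p.1 - x 0 p.2| := Finset.inf'_le _ hp
      rw [← h] at hple
      linarith
    · exact h
  have hbefore : ∀ s, 0 ≤ s → s < u → ∀ p ∈ P, y < |x s p.1 - x s p.2| := by
    intro s hs hsu p hp
    by_contra hle
    push_neg at hle
    have hmem : s ∈ K := ⟨⟨hs, le_trans hsu.le hut⟩, p, hp, hle⟩
    exact absurd hmem (notMem_of_lt_csInf hsu hKbdd)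
  -- the active pair at time u
  set d := P.inf' hpairs (fun p => |x u p.1 - x u p.2|) with hdd
  obtain ⟨pm, hpm, hpme⟩ := Finset.exists_mem_eq_inf' hpairs (fun p => |x u p.1 - x u p.2|)
  have hdmin : ∀ k l : Fin N, k ≠ l → d ≤ |x u k - x u l| := by
    intro k l hkl
    rw [hdd]
    exact Finset.inf'_le _ (show ((k, l) : Fin N × Fin N) ∈ P from
      Finset.mem_offDiag.mpr ⟨Finset.mem_univ _, Finset.mem_univ _, hkl⟩)
  have hdpos : 0 < d := by rw [hdd, hpme]; exact hdistpos u hu0 pm hpm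
  have hdy : d ≤ y := by
    obtain ⟨p, hp, hple⟩ := huK.2
    rw [hdd]
    exact le_trans (Finset.inf'_le _ hp) hple
  have hpmne := (Finset.mem_offDiag.mp hpm).2.2
  obtain ⟨ii, jj, hiijj, hord⟩ : ∃ ii jj : Fin N, ii ≠ jj ∧ x u jj - x u ii = d := by
    rcases (hsep u hu0 pm.1 pm.2 hpmne).lt_or_gt with h | h
    · refine ⟨pm.1, pm.2, hpmne, ?_⟩
      rw [hdd, hpme, abs_of_neg (by linarith : x u pm.1 - x u pm.2 < 0)]
      ring
    · refine ⟨pm.2, pm.1, Ne.symm hpmne, ?_⟩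
      rw [hdd, hpme, abs_of_pos (by linarith : 0 < x u pm.1 - x u pm.2)]
  have hd2 : 0 < x u jj - x u ii := by rw [hord]; exact hdpos
  have hmind : ∀ k l : Fin N, k ≠ l → x u jj - x u ii ≤ |x u k - x u l| := by
    rw [hord]; exact hdmin
  have hsmall : (N:ℝ) ^ (β-1) * (1 + (∑ p, |ν p|) * N * (β-1) / (2*κ))
      < (x u jj - x u ii) ^ (1 - β) := by
    have hdδ : d < δ := lt_of_le_of_lt hdy hyδ
    have h2 : δ ^ (1-β) < d ^ (1-β) :=
      Real.rpow_lt_rpow_of_neg hdpos hdδ (by linarith)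
    rw [hord]
    calc (N:ℝ) ^ (β-1) * (1 + (∑ p, |ν p|) * N * (β-1) / (2*κ)) = T0 := by rw [hT0, hM]
      _ = δ ^ (1-β) := hδpow.symm
      _ < d ^ (1-β) := h2
  have hq := key_pos hN hβ hκ ν (x u) ii jj hiijj hd2 hmind hsmall
  have hgd : HasDerivWithinAt (fun s => x s jj - x s ii)
      ((ν jj + κ / N * ∑ k ∈ Finset.univ.erase jj, PhiCS β (x u k - x u jj))
        - (ν ii + κ / N * ∑ k ∈ Finset.univ.erase ii, PhiCS β (x u k - x u ii)))
      (Ici 0) u := (hderiv jj u hu0).sub (hderiv ii u hu0)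
  -- pass to the left-filter
  have hfilter : 𝓝[<] u ≤ 𝓝[Ici 0 \ {u}] u := by
    rw [← nhdsWithin_Ico_eq_nhdsLT hupos]
    exact nhdsWithin_mono _ (fun s hs => ⟨hs.1, ne_of_lt hs.2⟩)
  have hfilter2 : 𝓝[<] u ≤ 𝓝[Ici 0] u := by
    rw [← nhdsWithin_Ico_eq_nhdsLT hupos]
    exact nhdsWithin_mono _ (fun s hs => hs.1)
  have hslope := (hasDerivWithinAt_iff_tendsto_slope.mp hgd).mono_left hfilter
  have h1 : ∀ᶠ s in 𝓝[<] u, 0 < slope (fun s => x s jj - x s ii) u s :=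
    hslope.eventually (eventually_gt_nhds hq)
  have hcontg : Tendsto (fun s => x s jj - x s ii) (𝓝[<] u) (𝓝 (x u jj - x u ii)) :=
    (hgd.continuousWithinAt).mono_left hfilter2
  have h2 : ∀ᶠ s in 𝓝[<] u, 0 < x s jj - x s ii := hcontg.eventually (eventually_gt_nhds hd2)
  have h3 : ∀ᶠ s in 𝓝[<] u, 0 < s :=
    Filter.eventually_of_mem (nhdsWithin_le_nhds (Ioi_mem_nhds hupos)) (fun s hs => hs)
  have h4 : ∀ᶠ s in 𝓝[<] u, s < u :=
    Filter.eventually_of_mem self_mem_nhdsWithin (fun s hs => hs)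
  obtain ⟨s, hs1, hs2, hs3, hs4⟩ := (h1.and (h2.and (h3.and h4))).exists
  rw [slope_def_field] at hs1
  have hs1' : 0 < (x s jj - x s ii - (x u jj - x u ii)) / (s - u) := hs1
  have hnum : x s jj - x s ii - (x u jj - x u ii) < 0 := by
    by_contra hge
    push_neg at hge
    have h5 : (x s jj - x s ii - (x u jj - x u ii)) / (s - u) ≤ 0 :=
      div_nonpos_of_nonneg_of_nonpos hge (by linarith)
    linarith
  have hy' := hbefore s hs3.le hs4 (jj, ii)
    (Finset.mem_offDiag.mpr ⟨Finset.mem_univ _, Finset.mem_univ _, hiijj.symm⟩)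
  rw [show ((jj, ii) : Fin N × Fin N).1 = jj from rfl,
    show ((jj, ii) : Fin N × Fin N).2 = ii from rfl, abs_of_pos hs2] at hy'
  linarith [hord, hdy, hnum]
end

section
/- Let x be a collision-free solution of the first-order singular Cucker–Smale system with β > 1, and set D_ν = max_i ν_i − min_i ν_i. For t ≥ 0 and 1 ≤ p ≤ N(N−1)/2, let D_p(t) denote the p-th smallest value among the N(N−1)/2 pairwise distances |x_i(t) − x_j(t)| with i < j. Fix an integer p with 1 ≤ p < N(N−1)/2 and suppose there is a constant C_1 > 0 such that D_q(t) ≥ C_1 for every q > p and every t ≥ 0. Then D_p(t) ≥ C_2 for every t ≥ 0, where C_2 = min{ (1 + (β−1)·(N/(2κ))·(2κ·max{|Φ(C_1)|, 1/(β−1)} + D_ν))^{−1/(β−1)}, 1, D_p(0), C_1/2 }. -/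
open Real Filter Set Topology

/-- The diameter of a configuration `y : Fin N → ℝ`. -/
noncomputable def diam {N : ℕ} (y : Fin N → ℝ) : ℝ := ⨆ i, ⨆ j, (y i - y j)

/-- `Dp N y p` is the `p`-th smallest (1-indexed) of the `N(N−1)/2` pairwise
distances `|y_i − y_j|`, `i < j`. -/
noncomputable def Dp (N : ℕ) (y : Fin N → ℝ) (p : ℕ) : ℝ :=
  (((Finset.univ.filter (fun q : Fin N × Fin N => q.1 < q.2)).val.map
    (fun q : Fin N × Fin N => |y q.1 - y q.2|)).sort (· ≤ ·)).getD (p - 1) 0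

/-! ### Auxiliary lemmas on sorted lists -/

lemma sorted_getD_mono (l : List ℝ) (hl : l.Pairwise (· ≤ ·)) {a b : ℕ} (hab : a ≤ b)
    (hb : b < l.length) : l.getD a 0 ≤ l.getD b 0 := by
  rcases eq_or_lt_of_le hab with rfl | h
  · exact le_refl _
  · rw [List.getD_eq_getElem l 0 (lt_of_le_of_lt hab hb), List.getD_eq_getElem l 0 hb]
    exact List.pairwise_iff_getElem.1 hl a b _ _ h

lemma countP_le_of_getD (l : List ℝ) (hl : l.Pairwise (· ≤ ·)) {k : ℕ} (hk : k < l.length)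
    (q : ℝ → Bool) (h : ∀ a : ℝ, q a → a < l.getD k 0) : l.countP q ≤ k := by
  have hsplit : l = l.take k ++ l.drop k := (List.take_append_drop k l).symm
  have hdrop : (l.drop k).countP q = 0 := by
    rw [List.countP_eq_zero]
    intro a ha
    obtain ⟨i, hi, rfl⟩ := List.mem_iff_getElem.1 ha
    rw [List.getElem_drop]
    intro hqa
    have h1 := h _ hqa
    rw [List.getD_eq_getElem l 0 hk] at h1
    have h2 : l[k] ≤ l[k + i]'(by simp at hi; omega) := by
      rcases Nat.eq_or_lt_of_le (Nat.le_add_right k i) with he | hlt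
      · exact le_of_eq (by congr 1)
      · exact List.pairwise_iff_getElem.1 hl k (k+i) hk (by simp at hi; omega) hlt
    exact absurd h1 (not_lt.2 h2)
  calc l.countP q = (l.take k).countP q + (l.drop k).countP q := by
        rw [← List.countP_append, ← hsplit]
    _ = (l.take k).countP q := by rw [hdrop, Nat.add_zero]
    _ ≤ (l.take k).length := List.countP_le_length
    _ ≤ k := by simp [List.length_take]

lemma le_countP_of_getD_lt (l : List ℝ) (hl : l.Pairwise (· ≤ ·)) {k : ℕ} (hk : k < l.length)
    {c : ℝ} (h : l.getD k 0 < c) : k + 1 ≤ l.countP (fun a => decide (a < c)) := by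
  have hsub : (l.take (k+1)).Sublist l := List.take_sublist _ _
  have hlen : (l.take (k+1)).length = k + 1 := by
    rw [List.length_take]; omega
  have hall : (l.take (k+1)).countP (fun a => decide (a < c)) = (l.take (k+1)).length := by
    rw [List.countP_eq_length]
    intro a ha
    obtain ⟨i, hi, rfl⟩ := List.mem_iff_getElem.1 ha
    rw [hlen] at hi
    rw [List.getElem_take]
    simp only [decide_eq_true_eq]
    calc l[i]'(by omega) ≤ l.getD k 0 := by
          rw [List.getD_eq_getElem l 0 hk]
          rcases Nat.eq_or_lt_of_le (Nat.lt_succ_iff.1 hi) with he | hlt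
          · exact le_of_eq (by congr 1)
          · exact List.pairwise_iff_getElem.1 hl i k _ _ hlt
      _ < c := h
  calc k + 1 = (l.take (k+1)).countP (fun a => decide (a < c)) := by rw [hall, hlen]
    _ ≤ l.countP _ := hsub.countP_le

lemma getD_succ_le_of_mem (l : List ℝ) (hl : l.Pairwise (· ≤ ·)) {k : ℕ} (hk : k + 1 < l.length)
    {a : ℝ} (ha : a ∈ l) (h : l.getD k 0 < a) : l.getD (k+1) 0 ≤ a := by
  obtain ⟨m, hm, rfl⟩ := List.mem_iff_getElem.1 ha
  have hkm : k + 1 ≤ m := by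
    by_contra hc
    push_neg at hc
    have : l[m] ≤ l.getD k 0 := by
      rw [List.getD_eq_getElem l 0 (by omega)]
      rcases Nat.eq_or_lt_of_le (Nat.lt_succ_iff.1 hc) with he | hlt
      · exact le_of_eq (by congr 1)
      · exact List.pairwise_iff_getElem.1 hl m k _ _ hlt
    exact absurd (lt_of_lt_of_le h this) (lt_irrefl _)
  calc l.getD (k+1) 0 ≤ l.getD m 0 := sorted_getD_mono l hl hkm hm
    _ = l[m] := List.getD_eq_getElem l 0 hm

/-! ### The multiset of pairwise distances -/

noncomputable def pairsF (N : ℕ) : Finset (Fin N × Fin N) :=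
  Finset.univ.filter (fun q : Fin N × Fin N => q.1 < q.2)

noncomputable def distM (N : ℕ) (y : Fin N → ℝ) : Multiset ℝ :=
  (pairsF N).val.map (fun q : Fin N × Fin N => |y q.1 - y q.2|)

noncomputable def sortL (N : ℕ) (y : Fin N → ℝ) : List ℝ := (distM N y).sort (· ≤ ·)

lemma Dp_eq (N : ℕ) (y : Fin N → ℝ) (p : ℕ) : Dp N y p = (sortL N y).getD (p-1) 0 := rfl

lemma sortL_sorted (N : ℕ) (y : Fin N → ℝ) : (sortL N y).Pairwise (· ≤ ·) :=
  Multiset.pairwise_sort _ _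

lemma length_sortL (N : ℕ) (y : Fin N → ℝ) : (sortL N y).length = (pairsF N).card := by
  rw [sortL, Multiset.length_sort, distM, Multiset.card_map]
  rfl

lemma mem_sortL (N : ℕ) (y : Fin N → ℝ) (a : ℝ) : a ∈ sortL N y ↔ a ∈ distM N y :=
  Multiset.mem_sort _

lemma mem_distM (N : ℕ) (y : Fin N → ℝ) {a b : Fin N} (hab : a ≠ b) :
    |y a - y b| ∈ distM N y := by
  rcases lt_or_gt_of_ne hab with h | h
  · exact Multiset.mem_map.2 ⟨(a, b), by simp [pairsF, Finset.mem_filter, h], rfl⟩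
  · exact Multiset.mem_map.2 ⟨(b, a), by simp [pairsF, Finset.mem_filter, h], abs_sub_comm _ _⟩

lemma countP_sortL (N : ℕ) (y : Fin N → ℝ) (pred : ℝ → Prop) [DecidablePred pred] :
    (sortL N y).countP (fun a => decide (pred a)) =
      ((pairsF N).filter (fun q => pred (|y q.1 - y q.2|))).card := by
  classical
  have h1 : (sortL N y).countP (fun a => decide (pred a)) = Multiset.countP pred (distM N y) := by
    rw [← Multiset.coe_countP]
    congr 1
    exact Multiset.sort_eq _ _
  rw [h1, distM, Multiset.countP_map]
  rw [Finset.card_def, Finset.filter_val]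

lemma two_mul_card_pairsF {N : ℕ} : 2 * (pairsF N).card = N * N - N := by
  classical
  set P' : Finset (Fin N × Fin N) := Finset.univ.filter (fun q => q.2 < q.1) with hP'
  have h1 : (pairsF N).card = P'.card := by
    refine Finset.card_bij' (fun q _ => (q.2, q.1)) (fun q _ => (q.2, q.1)) ?_ ?_ ?_ ?_
    · intro q hq; simp [pairsF, hP'] at hq ⊢; exact hq
    · intro q hq; simp [pairsF, hP'] at hq ⊢; exact hq
    · intro q hq; rfl
    · intro q hq; rfl
  have hdisj : Disjoint (pairsF N) P' := by
    rw [Finset.disjoint_left]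
    intro q hq hq'
    simp [pairsF, hP'] at hq hq'
    exact absurd (lt_trans hq hq') (lt_irrefl _)
  have hunion : pairsF N ∪ P' = Finset.univ.offDiag := by
    ext q
    simp only [pairsF, hP', Finset.mem_union, Finset.mem_filter, Finset.mem_univ, true_and,
      Finset.mem_offDiag, Prod.ext_iff]
    constructor
    · rintro (h | h) <;> simp_all [Prod.ext_iff, ne_of_lt h, (ne_of_lt h).symm]
    · intro h
      by_cases h12 : q.1 = q.2
      · exact absurd (by simp_all [Prod.ext_iff]) h
      · rcases lt_or_gt_of_ne h12 with hh | hh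
        · exact Or.inl hh
        · exact Or.inr hh
  have hcard := Finset.card_union_of_disjoint hdisj
  rw [hunion, Finset.offDiag_card, ← h1] at hcard
  simp only [Finset.card_univ, Fintype.card_prod, Fintype.card_fin] at hcard ⊢
  omega

lemma card_pairsF {N : ℕ} : (pairsF N).card = N * (N - 1) / 2 := by
  have h := two_mul_card_pairsF (N := N)
  have h2 : N * N - N = N * (N - 1) := by
    cases N with
    | zero => simp
    | succ n =>
      have hr : (n+1) * (n+1) = (n+1) * n + (n+1) := by ring
      simp only [Nat.succ_sub_one]
      omega
  omega

lemma Dp_nonneg (N : ℕ) (y : Fin N → ℝ) (p : ℕ) : 0 ≤ Dp N y p := by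
  rw [Dp_eq]
  rcases lt_or_ge (p - 1) (sortL N y).length with h | h
  · have hm : (sortL N y).getD (p-1) 0 ∈ sortL N y := by
      rw [List.getD_eq_getElem _ 0 h]
      exact List.getElem_mem _
    rw [mem_sortL] at hm
    obtain ⟨q, -, hq⟩ := Multiset.mem_map.1 hm
    rw [← hq]
    exact abs_nonneg _
  · rw [List.getD_eq_default _ 0 h]

lemma PhiCS_nonpos {β y : ℝ} (hβ : 1 < β) (hy : 0 < y) (hy1 : y ≤ 1) : PhiCS β y ≤ 0 := by
  rw [PhiCS_of_pos hy]
  apply div_nonpos_of_nonpos_of_nonneg _ (by linarith)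
  have : (1:ℝ) ≤ y ^ (1 - β) :=
    Real.one_le_rpow_of_pos_of_le_one_of_nonpos hy hy1 (by linarith)
  linarith

lemma abs_PhiCS_le {β C1 z : ℝ} (hβ : 1 < β) (hC1 : 0 < C1) (hz : C1 ≤ z) :
    |PhiCS β z| ≤ max |PhiCS β C1| (1 / (β - 1)) := by
  have hz0 : 0 < z := lt_of_lt_of_le hC1 hz
  have hβ0 : (0:ℝ) < β - 1 := by linarith
  rw [PhiCS_of_pos hz0]
  have ht0 : 0 < z ^ (1 - β) := Real.rpow_pos_of_pos hz0 _
  have htT : z ^ (1 - β) ≤ C1 ^ (1 - β) :=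
    Real.rpow_le_rpow_of_nonpos hC1 hz (by linarith)
  rcases le_or_gt (z ^ (1 - β)) 1 with h1 | h1
  · refine le_trans ?_ (le_max_right _ _)
    rw [abs_div, abs_of_pos hβ0, div_le_div_iff₀ (by positivity) hβ0, one_mul]
    rw [abs_of_nonneg (by linarith)]
    nlinarith
  · refine le_trans ?_ (le_max_left _ _)
    rw [PhiCS_of_pos hC1, abs_div, abs_div, abs_of_pos hβ0,
      abs_of_nonpos (by linarith : 1 - z ^ (1 - β) ≤ 0),
      abs_of_nonpos (by linarith : 1 - C1 ^ (1 - β) ≤ 0)]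
    gcongr

lemma abs_PhiCS_le' {β C1 z : ℝ} (hβ : 1 < β) (hC1 : 0 < C1) (hz : C1 ≤ |z|) :
    |PhiCS β z| ≤ max |PhiCS β C1| (1 / (β - 1)) := by
  rcases le_or_gt 0 z with h | h
  · rw [abs_of_nonneg h] at hz
    exact abs_PhiCS_le hβ hC1 hz
  · rw [abs_of_neg h] at hz
    have := abs_PhiCS_le hβ hC1 hz
    rwa [show z = -(-z) by ring, PhiCS_neg, abs_neg]

lemma thresh {β κ Dν Minf c : ℝ} (N : ℕ) (hN : 2 ≤ N) (hβ : 1 < β) (hκ : 0 < κ)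
    (hD : 0 ≤ Dν) (hM : 1 / (β - 1) ≤ Minf) (hc0 : 0 < c)
    (hcA : c < (1 + (β - 1) * ((N:ℝ) / (2 * κ)) * (2 * κ * Minf + Dν)) ^ (-(1 / (β - 1)))) :
    0 < -Dν - 2 * κ * Minf + (κ / (N:ℝ)) * (2 * ((c ^ (1 - β) - 1) / (β - 1))) := by
  have hβ0 : (0:ℝ) < β - 1 := by linarith
  have hNpos : (0:ℝ) < (N:ℝ) := by positivity
  have hM0 : 0 < Minf := lt_of_lt_of_le (by positivity) hM
  obtain ⟨X, hX⟩ : ∃ X : ℝ, X = ((N:ℝ) / (2 * κ)) * (2 * κ * Minf + Dν) := ⟨_, rfl⟩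
  have hX0 : 0 ≤ X := by rw [hX]; positivity
  obtain ⟨B, hB⟩ : ∃ B : ℝ, B = 1 + (β - 1) * X := ⟨_, rfl⟩
  have hBeq : 1 + (β - 1) * ((N:ℝ) / (2 * κ)) * (2 * κ * Minf + Dν) = B := by
    rw [hB, hX]; ring
  rw [hBeq] at hcA
  have hB1 : (1:ℝ) ≤ B := by nlinarith
  have hB0 : (0:ℝ) < B := by linarith
  have h1 : (B ^ (-(1/(β-1)))) ^ (1 - β) < c ^ (1 - β) :=
    Real.rpow_lt_rpow_of_neg hc0 hcA (by linarith)
  have h2 : (B ^ (-(1/(β-1)))) ^ (1 - β) = B := by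
    rw [← Real.rpow_mul (le_of_lt hB0)]
    rw [show (-(1/(β-1))) * (1-β) = 1 by field_simp; ring]
    exact Real.rpow_one B
  rw [h2] at h1
  have key : (B - 1) / (β - 1) = X := by
    rw [hB]
    field_simp
    ring
  have hgt : X < (c ^ (1-β) - 1) / (β - 1) := by
    rw [← key]
    gcongr
  have hmul : (κ / (N:ℝ)) * (2 * X) = 2 * κ * Minf + Dν := by
    rw [hX]
    field_simp
  have hmul2 : (κ / (N:ℝ)) * (2 * X) < (κ / (N:ℝ)) * (2 * ((c ^ (1-β) - 1) / (β - 1))) := by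
    apply mul_lt_mul_of_pos_left _ (by positivity)
    linarith
  linarith

lemma diam_ge {N : ℕ} (hN : 0 < N) (ν : Fin N → ℝ) (a b : Fin N) : ν a - ν b ≤ diam ν := by
  haveI : Nonempty (Fin N) := ⟨⟨0, hN⟩⟩
  calc ν a - ν b ≤ ⨆ j, (ν a - ν j) :=
      le_ciSup (f := fun j => ν a - ν j) (Set.Finite.bddAbove (Set.finite_range _)) b
    _ ≤ ⨆ i, ⨆ j, (ν i - ν j) :=
      le_ciSup (f := fun i => ⨆ j, (ν i - ν j)) (Set.Finite.bddAbove (Set.finite_range _)) a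

lemma diam_nonneg {N : ℕ} (hN : 0 < N) (ν : Fin N → ℝ) : 0 ≤ diam ν := by
  have := diam_ge hN ν ⟨0, hN⟩ ⟨0, hN⟩
  linarith
section KeyPart
variable {N : ℕ}

lemma dich (N : ℕ) (p : ℕ) (hp1 : 1 ≤ p) (hpcard : p < (pairsF N).card)
    (y : Fin N → ℝ) (C1 c : ℝ)
    (hC1getD : C1 ≤ (sortL N y).getD p 0) (hDp : Dp N y p ≤ c) :
    ∀ d ∈ distM N y, d < C1 → d ≤ c := by
  intro d hd hdC1
  by_contra hcd
  push_neg at hcd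
  have hlen : p < (sortL N y).length := by rw [length_sortL]; exact hpcard
  have hdl : d ∈ sortL N y := (mem_sortL N y d).2 hd
  have hgt : (sortL N y).getD (p-1) 0 < d := lt_of_le_of_lt (Dp_eq N y p ▸ hDp) hcd
  have h4 : (sortL N y).getD (p-1+1) 0 ≤ d :=
    getD_succ_le_of_mem _ (sortL_sorted N y) (by omega) hdl hgt
  rw [show p - 1 + 1 = p by omega] at h4
  exact absurd (lt_of_le_of_lt (le_trans hC1getD h4) hdC1) (lt_irrefl _)

lemma key_deriv (N : ℕ) (hN : 2 ≤ N) (β κ : ℝ) (hβ : 1 < β) (hκ : 0 < κ)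
    (ν : Fin N → ℝ) (x : ℝ → Fin N → ℝ) (hx : IsCFSol N β κ ν x)
    (C1 c τ : ℝ) (hC1 : 0 < C1) (hτ0 : (0:ℝ) ≤ τ)
    (hc0 : 0 < c) (hc1 : c < 1) (hcC1 : 2 * c < C1)
    (hcA : c < (1 + (β - 1) * ((N:ℝ) / (2 * κ)) *
        (2 * κ * max |PhiCS β C1| (1 / (β - 1)) + diam ν)) ^ (-(1 / (β - 1))))
    (hdich : ∀ d ∈ distM N (x τ), d < C1 → d ≤ c)
    (i j : Fin N) (hij : i ≠ j) (hyc : x τ j - x τ i = c) :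
    ∀ᶠ s in 𝓝[>] τ, c < x s j - x s i := by
  have hβ0 : (0:ℝ) < β - 1 := by linarith
  have hNpos : (0:ℝ) < (N:ℝ) := by positivity
  obtain ⟨Mi, hMi⟩ : ∃ Mi : ℝ, Mi = max |PhiCS β C1| (1 / (β - 1)) := ⟨_, rfl⟩
  have hMile : 1 / (β - 1) ≤ Mi := hMi ▸ le_max_right _ _
  have hMi0 : 0 ≤ Mi := le_trans (by positivity) hMile
  have hcol := hx.1 τ hτ0
  have hdj := hx.2.2 j τ hτ0
  have hdi := hx.2.2 i τ hτ0
  have hd := hdj.sub hdi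
  set y : Fin N → ℝ := x τ with hy
  set S2 : Finset (Fin N) := Finset.univ \ {i, j} with hS2
  have hiS2 : i ∉ S2 := by simp [hS2]
  have hjS2 : j ∉ S2 := by simp [hS2]
  have hej : Finset.univ.erase j = insert i S2 := by
    ext k
    simp only [Finset.mem_erase, Finset.mem_univ, and_true, Finset.mem_insert, hS2,
      Finset.mem_sdiff, Finset.mem_insert, Finset.mem_singleton, true_and]
    constructor
    · intro hk
      by_cases hki : k = i
      · exact Or.inl hki
      · exact Or.inr (by tauto)
    · rintro (rfl | hk)
      · exact hij
      · tauto
  have hei : Finset.univ.erase i = insert j S2 := by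
    ext k
    simp only [Finset.mem_erase, Finset.mem_univ, and_true, Finset.mem_insert, hS2,
      Finset.mem_sdiff, Finset.mem_insert, Finset.mem_singleton, true_and]
    constructor
    · intro hk
      by_cases hkj : k = j
      · exact Or.inl hkj
      · exact Or.inr (by tauto)
    · rintro (rfl | hk)
      · exact hij.symm
      · tauto
  -- the derivative of the gap
  obtain ⟨d, hdval, hder⟩ : ∃ d : ℝ,
      d = (ν j + (κ / (N:ℝ)) * ∑ k ∈ Finset.univ.erase j, PhiCS β (y k - y j)) -
          (ν i + (κ / (N:ℝ)) * ∑ k ∈ Finset.univ.erase i, PhiCS β (y k - y i)) ∧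
      HasDerivWithinAt (fun s => x s j - x s i) d (Set.Ici 0) τ := ⟨_, rfl, hd⟩
  have hval : d = (ν j - ν i) + (κ / (N:ℝ)) *
      ((PhiCS β (y i - y j) - PhiCS β (y j - y i)) +
        ∑ k ∈ S2, (PhiCS β (y k - y j) - PhiCS β (y k - y i))) := by
    rw [hdval, hej, hei, Finset.sum_insert hiS2, Finset.sum_insert hjS2,
      Finset.sum_sub_distrib]
    ring
  have hpair : PhiCS β (y i - y j) - PhiCS β (y j - y i) = 2 * ((c ^ (1-β) - 1) / (β - 1)) := by
    have h1 : y i - y j = -c := by rw [← hyc]; ring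
    rw [h1, hyc, PhiCS_neg, PhiCS_of_pos hc0]
    ring
  have hterm : ∀ k ∈ S2, -(2*Mi) ≤ PhiCS β (y k - y j) - PhiCS β (y k - y i) := by
    intro k hk
    have hki : k ≠ i := by simp [hS2] at hk; tauto
    have hkj : k ≠ j := by simp [hS2] at hk; tauto
    have hyki : y k ≠ y i := hcol k i hki
    have hykj : y k ≠ y j := hcol k j hkj
    have hd1mem : |y k - y i| ∈ distM N y := mem_distM N y hki
    have hd2mem : |y k - y j| ∈ distM N y := mem_distM N y hkj
    have hijabs : |y i - y j| = c := by
      rw [show y i - y j = -(y j - y i) by ring, abs_neg, hyc, abs_of_pos hc0]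
    by_cases hfar : |y k - y i| < C1
    · have hd1c : |y k - y i| ≤ c := hdich _ hd1mem hfar
      have htri : |y k - y j| ≤ |y k - y i| + |y i - y j| := abs_sub_le _ _ _
      have hd2c : |y k - y j| ≤ c := hdich _ hd2mem (by rw [hijabs] at htri; linarith)
      have hik : y i < y k := by
        rcases lt_or_gt_of_ne hyki with hlt | hgt
        · exfalso
          have h5 : y j - y k ≤ |y k - y j| := by
            rw [abs_sub_comm]; exact le_abs_self _
          linarith
        · exact hgt
      have hkj' : y k < y j := by
        rcases lt_or_gt_of_ne hykj with hlt | hgt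
        · exact hlt
        · exfalso
          have h5 : y k - y i ≤ |y k - y i| := le_abs_self _
          linarith
      have h6 : PhiCS β (y k - y i) ≤ 0 :=
        PhiCS_nonpos hβ (by linarith) (by linarith)
      have h7 : 0 ≤ PhiCS β (y k - y j) := by
        rw [show y k - y j = -(y j - y k) by ring, PhiCS_neg]
        have := PhiCS_nonpos hβ (show 0 < y j - y k by linarith) (by linarith)
        linarith
      linarith
    · push_neg at hfar
      have hfar2 : C1 ≤ |y k - y j| := by
        by_contra h8
        push_neg at h8
        have hd2c : |y k - y j| ≤ c := hdich _ hd2mem h8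
        have htri : |y k - y i| ≤ |y k - y j| + |y j - y i| := abs_sub_le _ _ _
        rw [show |y j - y i| = c by rw [hyc, abs_of_pos hc0]] at htri
        linarith
      have h9 := abs_PhiCS_le' hβ hC1 hfar
      have h10 := abs_PhiCS_le' hβ hC1 hfar2
      rw [← hMi] at h9 h10
      have h11 := abs_le.1 h9
      have h12 := abs_le.1 h10
      linarith [h11.1, h11.2, h12.1, h12.2]
  have hsum : (N:ℝ) * (-(2*Mi)) ≤ ∑ k ∈ S2, (PhiCS β (y k - y j) - PhiCS β (y k - y i)) := by
    calc (N:ℝ) * (-(2*Mi)) ≤ (S2.card : ℝ) * (-(2*Mi)) := by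
          apply mul_le_mul_of_nonpos_right _ (by linarith)
          exact_mod_cast le_trans (Finset.card_le_univ S2) (by simp)
      _ = ∑ _k ∈ S2, -(2*Mi) := by rw [Finset.sum_const, nsmul_eq_mul]
      _ ≤ _ := Finset.sum_le_sum hterm
  have hν' : -(diam ν) ≤ ν j - ν i := by
    have := diam_ge (show 0 < N by omega) ν i j
    linarith
  have hth := thresh N hN hβ hκ (diam_nonneg (show 0 < N by omega) ν) hMile hc0
    (by rw [hMi]; exact hcA)
  have hκN : (0:ℝ) ≤ κ / (N:ℝ) := by positivity
  have h6 : (κ / (N:ℝ)) * ((N:ℝ) * (-(2*Mi))) = -(2 * κ * Mi) := by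
    field_simp
  have hdpos : 0 < d := by
    rw [hval, hpair, mul_add]
    have h7 := mul_le_mul_of_nonneg_left hsum hκN
    rw [h6] at h7
    linarith
  -- conclude via the slope
  have htend := hasDerivWithinAt_iff_tendsto_slope.1 hder
  have hsub : Set.Ioi τ ⊆ Set.Ici (0:ℝ) \ {τ} := by
    intro s hs
    exact ⟨le_trans hτ0 (le_of_lt hs), ne_of_gt hs⟩
  have htend' : Filter.Tendsto (slope (fun s => x s j - x s i) τ) (𝓝[>] τ) (𝓝 d) :=
    htend.mono_left (nhdsWithin_mono τ hsub)
  have hev := htend'.eventually (eventually_gt_nhds hdpos)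
  filter_upwards [hev, self_mem_nhdsWithin] with s hs hsτ
  have hsτ' : τ < s := hsτ
  rw [slope_def_field] at hs
  have h8 : 0 < (x s j - x s i) - (x τ j - x τ i) := by
    have h9 := mul_pos hs (show (0:ℝ) < s - τ by linarith)
    rwa [div_mul_cancel₀ _ (show s - τ ≠ 0 by intro h; rw [h] at h9; linarith)] at h9
  linarith [hyc, h8]

end KeyPart
/-- Inductive step of the uniform lower bound: if all larger ordered pairwise
distances are uniformly bounded below by `C₁`, then `D_p` is uniformly bounded
below by `C₂`. -/
theorem stmt10 (N : ℕ) (hN : 2 ≤ N) (β κ : ℝ) (hβ : 1 < β) (hκ : 0 < κ)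
    (ν : Fin N → ℝ) (hν : ∑ i, ν i = 0)
    (x : ℝ → Fin N → ℝ) (hx : IsCFSol N β κ ν x)
    (p : ℕ) (hp1 : 1 ≤ p) (hp2 : p < N * (N - 1) / 2)
    (C1 : ℝ) (hC1 : 0 < C1)
    (hq : ∀ q : ℕ, p < q → q ≤ N * (N - 1) / 2 → ∀ t ≥ (0:ℝ), C1 ≤ Dp N (x t) q) :
    ∀ t ≥ (0:ℝ),
      min (min
        ((1 + (β - 1) * ((N:ℝ) / (2 * κ)) *
            (2 * κ * max |PhiCS β C1| (1 / (β - 1)) + diam ν)) ^ (-(1 / (β - 1))))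
        1)
        (min (Dp N (x 0) p) (C1 / 2))
      ≤ Dp N (x t) p := by
  classical
  intro t ht
  by_contra hcon
  push_neg at hcon
  obtain ⟨C2, hC2⟩ : ∃ C2 : ℝ, C2 = min
      (min ((1 + (β - 1) * ((N:ℝ) / (2 * κ)) *
            (2 * κ * max |PhiCS β C1| (1 / (β - 1)) + diam ν)) ^ (-(1 / (β - 1)))) 1)
      (min (Dp N (x 0) p) (C1 / 2)) := ⟨_, rfl⟩
  rw [← hC2] at hcon
  obtain ⟨c, hc⟩ : ∃ c : ℝ, c = (Dp N (x t) p + C2) / 2 := ⟨_, rfl⟩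
  have hDpt0 : 0 ≤ Dp N (x t) p := Dp_nonneg N (x t) p
  have hct : Dp N (x t) p < c := by rw [hc]; linarith
  have hcC2 : c < C2 := by rw [hc]; linarith
  have hc0 : 0 < c := by rw [hc]; linarith
  have hcA : c < (1 + (β - 1) * ((N:ℝ) / (2 * κ)) *
      (2 * κ * max |PhiCS β C1| (1 / (β - 1)) + diam ν)) ^ (-(1 / (β - 1))) := by
    refine lt_of_lt_of_le hcC2 ?_
    rw [hC2]
    exact le_trans (min_le_left _ _) (min_le_left _ _)
  have hc1 : c < 1 := by
    refine lt_of_lt_of_le hcC2 ?_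
    rw [hC2]
    exact le_trans (min_le_left _ _) (min_le_right _ _)
  have hcD0 : c < Dp N (x 0) p := by
    refine lt_of_lt_of_le hcC2 ?_
    rw [hC2]
    exact le_trans (min_le_right _ _) (min_le_left _ _)
  have hcC1 : 2 * c < C1 := by
    have h0 : c < C1 / 2 := by
      refine lt_of_lt_of_le hcC2 ?_
      rw [hC2]
      exact le_trans (min_le_right _ _) (min_le_right _ _)
    linarith
  -- counting facts
  have hcard : (pairsF N).card = N * (N - 1) / 2 := card_pairsF
  have hpk : p - 1 < (pairsF N).card := by omega
  have hpk2 : p < (pairsF N).card := by omega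
  have hA1 : ∀ y : Fin N → ℝ, c ≤ Dp N y p →
      ((pairsF N).filter (fun q => |y q.1 - y q.2| < c)).card ≤ p - 1 := by
    intro y hy
    rw [← countP_sortL N y (fun a => a < c)]
    apply countP_le_of_getD (sortL N y) (sortL_sorted N y)
      (show p - 1 < (sortL N y).length by rw [length_sortL]; omega)
    intro a ha
    exact lt_of_lt_of_le (of_decide_eq_true ha) (by rw [← Dp_eq]; exact hy)
  have hA1' : ∀ y : Fin N → ℝ, c < Dp N y p →
      ((pairsF N).filter (fun q => |y q.1 - y q.2| ≤ c)).card ≤ p - 1 := by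
    intro y hy
    rw [← countP_sortL N y (fun a => a ≤ c)]
    apply countP_le_of_getD (sortL N y) (sortL_sorted N y)
      (show p - 1 < (sortL N y).length by rw [length_sortL]; omega)
    intro a ha
    exact lt_of_le_of_lt (of_decide_eq_true ha) (by rw [← Dp_eq]; exact hy)
  have hA2 : ∀ y : Fin N → ℝ, Dp N y p < c →
      p ≤ ((pairsF N).filter (fun q => |y q.1 - y q.2| < c)).card := by
    intro y hy
    have h1 := le_countP_of_getD_lt (sortL N y) (sortL_sorted N y)
      (show p - 1 < (sortL N y).length by rw [length_sortL]; omega)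
      (c := c) (by rw [← Dp_eq]; exact hy)
    rw [countP_sortL N y (fun a => a < c)] at h1
    omega
  -- continuity of pairwise distances
  have hcw : ∀ (q : Fin N × Fin N) (s : ℝ), 0 ≤ s →
      ContinuousWithinAt (fun u => |x u q.1 - x u q.2|) (Set.Ici 0) s := by
    intro q s hs
    exact (((hx.2.2 q.1 s hs).continuousWithinAt).sub
      ((hx.2.2 q.2 s hs).continuousWithinAt)).abs
  -- the set of times where D_p is still at least c
  obtain ⟨S, hS⟩ : ∃ S : Set ℝ, S = {s : ℝ | s ∈ Set.Icc 0 t ∧ c ≤ Dp N (x s) p} := ⟨_, rfl⟩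
  have hS0 : (0:ℝ) ∈ S := by
    rw [hS]
    exact ⟨⟨le_refl _, ht⟩, le_of_lt hcD0⟩
  have hSne : S.Nonempty := ⟨0, hS0⟩
  have hSbdd : BddAbove S := ⟨t, fun s hs => by rw [hS] at hs; exact hs.1.2⟩
  obtain ⟨τ, hτ⟩ : ∃ τ : ℝ, τ = sSup S := ⟨_, rfl⟩
  have hτ0 : 0 ≤ τ := by rw [hτ]; exact le_csSup hSbdd hS0
  have hτt : τ ≤ t := by
    rw [hτ]
    exact csSup_le hSne (fun s hs => by rw [hS] at hs; exact hs.1.2)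
  have hmono : 𝓝[>] τ ≤ 𝓝[Set.Ici (0:ℝ)] τ :=
    nhdsWithin_mono τ (fun s hs => le_trans hτ0 (le_of_lt hs))
  -- τ belongs to S
  have hDτge : c ≤ Dp N (x τ) p := by
    by_contra h
    push_neg at h
    have hcnt := hA2 _ h
    have hev : ∀ᶠ s in 𝓝[Set.Ici (0:ℝ)] τ, ∀ q ∈
        (pairsF N).filter (fun q => |x τ q.1 - x τ q.2| < c),
        |x s q.1 - x s q.2| < c := by
      rw [eventually_all_finset]
      intro q hq'
      have hqlt : |x τ q.1 - x τ q.2| < c := (Finset.mem_filter.1 hq').2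
      exact (hcw q τ hτ0).eventually (eventually_lt_nhds hqlt)
    rw [Filter.eventually_iff, Metric.mem_nhdsWithin_iff] at hev
    obtain ⟨ε, hε, hball⟩ := hev
    obtain ⟨s, hsS, hsτ⟩ := exists_lt_of_lt_csSup hSne (show τ - ε < sSup S by rw [← hτ]; linarith)
    have hsle : s ≤ τ := by rw [hτ]; exact le_csSup hSbdd hsS
    have hs0 : (0:ℝ) ≤ s := by rw [hS] at hsS; exact hsS.1.1
    have hsball : s ∈ Metric.ball τ ε ∩ Set.Ici (0:ℝ) := by
      constructor
      · rw [Metric.mem_ball, Real.dist_eq, abs_lt]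
        constructor <;> linarith
      · exact hs0
    have hq' := hball hsball
    have hsub : (pairsF N).filter (fun q => |x τ q.1 - x τ q.2| < c) ⊆
        (pairsF N).filter (fun q => |x s q.1 - x s q.2| < c) := by
      intro q hqq
      exact Finset.mem_filter.2 ⟨(Finset.mem_filter.1 hqq).1, hq' q hqq⟩
    have h2 := Finset.card_le_card hsub
    have h3 : c ≤ Dp N (x s) p := by rw [hS] at hsS; exact hsS.2
    have h4 := hA1 _ h3
    omega
  have hτltt : τ < t := by
    rcases lt_or_eq_of_le hτt with h | h
    · exact h
    · rw [h] at hDτge; linarith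
  have hright : ∀ s : ℝ, τ < s → s ≤ t → Dp N (x s) p < c := by
    intro s hs1 hs2
    by_contra h'
    push_neg at h'
    have hsS : s ∈ S := by
      rw [hS]
      exact ⟨⟨le_trans hτ0 (le_of_lt hs1), hs2⟩, h'⟩
    have : s ≤ τ := by rw [hτ]; exact le_csSup hSbdd hsS
    linarith
  -- dichotomy at τ
  have hC1getD : C1 ≤ (sortL N (x τ)).getD p 0 := by
    have h1 := hq (p+1) (by omega) (by omega) τ hτ0
    rw [Dp_eq] at h1
    simpa using h1
  have hDτle : Dp N (x τ) p ≤ c := by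
    by_contra h
    push_neg at h
    have hcnt := hA1' _ h
    have hev1 : ∀ᶠ s in 𝓝[>] τ, ∀ q ∈ pairsF N,
        c < |x τ q.1 - x τ q.2| → c < |x s q.1 - x s q.2| := by
      rw [eventually_all_finset]
      intro q hq'
      by_cases hgt : c < |x τ q.1 - x τ q.2|
      · have := ((hcw q τ hτ0).eventually (eventually_gt_nhds hgt)).filter_mono hmono
        filter_upwards [this] with s hs _
        exact hs
      · exact Filter.Eventually.of_forall (fun s h' => absurd h' hgt)
    have hev2 : Set.Ioc τ t ∈ 𝓝[>] τ := Ioc_mem_nhdsGT hτltt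
    obtain ⟨s, hs1, hs2⟩ := (hev1.and hev2).exists
    have hDs := hright s hs2.1 hs2.2
    have h5 := hA2 _ hDs
    have hsub : (pairsF N).filter (fun q => |x s q.1 - x s q.2| < c) ⊆
        (pairsF N).filter (fun q => |x τ q.1 - x τ q.2| ≤ c) := by
      intro q hqq
      have hm := Finset.mem_filter.1 hqq
      refine Finset.mem_filter.2 ⟨hm.1, ?_⟩
      by_contra h6
      push_neg at h6
      exact absurd (hs1 q hm.1 h6) (not_lt.2 (le_of_lt hm.2))
    have h7 := Finset.card_le_card hsub
    omega
  have hDτ : Dp N (x τ) p = c := le_antisymm hDτle hDτge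
  have hdichτ : ∀ d ∈ distM N (x τ), d < C1 → d ≤ c :=
    dich N p hp1 hpk2 (x τ) C1 c hC1getD hDτle
  -- every pair at distance exactly c moves apart; pairs at distance ≥ C1 stay > c
  have hev1 : ∀ᶠ s in 𝓝[>] τ, ∀ q ∈ pairsF N,
      c ≤ |x τ q.1 - x τ q.2| → c < |x s q.1 - x s q.2| := by
    rw [eventually_all_finset]
    intro q hq'
    by_cases hge : c ≤ |x τ q.1 - x τ q.2|
    · have hne : q.1 ≠ q.2 := by
        have := (Finset.mem_filter.1 hq').2
        exact ne_of_lt this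
      have hmem : |x τ q.1 - x τ q.2| ∈ distM N (x τ) := mem_distM N (x τ) hne
      rcases lt_or_ge (|x τ q.1 - x τ q.2|) C1 with hlt | hgeC1
      · -- distance is exactly c : use the derivative estimate
        have heq : |x τ q.1 - x τ q.2| = c := le_antisymm (hdichτ _ hmem hlt) hge
        have hne2 : x τ q.1 ≠ x τ q.2 := hx.1 τ hτ0 q.1 q.2 hne
        rcases lt_or_gt_of_ne hne2 with hlt2 | hgt2
        · -- x τ q.1 < x τ q.2 : gap is x · q.2 - x · q.1
          have hyc : x τ q.2 - x τ q.1 = c := by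
            rw [← heq, abs_of_neg (by linarith : x τ q.1 - x τ q.2 < 0)]; ring
          have hkey := key_deriv N hN β κ hβ hκ ν x hx C1 c τ hC1 hτ0 hc0 hc1 hcC1 hcA
            hdichτ q.1 q.2 hne hyc
          filter_upwards [hkey] with s hs _
          calc c < x s q.2 - x s q.1 := hs
            _ ≤ |x s q.2 - x s q.1| := le_abs_self _
            _ = |x s q.1 - x s q.2| := abs_sub_comm _ _
        · have hyc : x τ q.1 - x τ q.2 = c := by
            rw [← heq, abs_of_pos (by linarith : 0 < x τ q.1 - x τ q.2)]
          have hkey := key_deriv N hN β κ hβ hκ ν x hx C1 c τ hC1 hτ0 hc0 hc1 hcC1 hcA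
            hdichτ q.2 q.1 hne.symm hyc
          filter_upwards [hkey] with s hs _
          calc c < x s q.1 - x s q.2 := hs
            _ ≤ |x s q.1 - x s q.2| := le_abs_self _
      · -- distance at least C1 > c : continuity
        have hgt : c < |x τ q.1 - x τ q.2| := lt_of_lt_of_le (by linarith) hgeC1
        have := ((hcw q τ hτ0).eventually (eventually_gt_nhds hgt)).filter_mono hmono
        filter_upwards [this] with s hs _
        exact hs
    · exact Filter.Eventually.of_forall (fun s h' => absurd h' hge)
  have hev2 : Set.Ioc τ t ∈ 𝓝[>] τ := Ioc_mem_nhdsGT hτltt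
  obtain ⟨s, hs1, hs2⟩ := (hev1.and hev2).exists
  have hDs := hright s hs2.1 hs2.2
  have h5 := hA2 _ hDs
  have hsub : (pairsF N).filter (fun q => |x s q.1 - x s q.2| < c) ⊆
      (pairsF N).filter (fun q => |x τ q.1 - x τ q.2| < c) := by
    intro q hqq
    have hm := Finset.mem_filter.1 hqq
    refine Finset.mem_filter.2 ⟨hm.1, ?_⟩
    by_contra h6
    push_neg at h6
    exact absurd (hs1 q hm.1 h6) (not_lt.2 (le_of_lt hm.2))
  have h7 := Finset.card_le_card hsub
  have h8 := hA1 _ hDτge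
  omega
end

section
/- Let x be a collision-free solution of the first-order singular Cucker–Smale system with β > 1 whose initial positions are strictly increasing: x_1(0) < x_2(0) < … < x_N(0). Define the critical coupling strength κ_c = max_{1 ≤ l ≤ N−1} ( −N(β−1)·Σ_{i=1}^l ν_i ) / ( l(N−l) ). If κ > κ_c, then mono-cluster flocking emerges: for every pair of indices i, j, the limit lim_{t→∞} |x_i(t) − x_j(t)| exists and is finite. -/
open Real Filter Set Topology

/-- The critical coupling strength
`κ_c = max_{1 ≤ l ≤ N−1} (−N(β−1)·Σ_{i=1}^l ν_i)/(l(N−l))`. -/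
noncomputable def kappaC (N : ℕ) (β : ℝ) (ν : Fin N → ℝ) : ℝ :=
  ⨆ l : Fin (N - 1),
    (-((N:ℝ) * (β - 1) * ∑ i : Fin N, if (i:ℕ) < (l:ℕ) + 1 then ν i else 0)) /
      ((((l:ℕ):ℝ) + 1) * ((N:ℝ) - (((l:ℕ):ℝ) + 1)))

namespace CS12

lemma phi_zero (β : ℝ) : PhiCS β 0 = 0 := by simp [PhiCS]

lemma phi_neg (β y : ℝ) : PhiCS β (-y) = - PhiCS β y := by
  simp only [PhiCS, Real.sign_neg, abs_neg]
  ring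

lemma phi_pos_eq {β : ℝ} {y : ℝ} (hy : 0 < y) :
    PhiCS β y = (1 - y ^ (1 - β)) / (β - 1) := by
  rw [PhiCS, Real.sign_of_pos hy, abs_of_pos hy, one_mul]

lemma rpow_anti {β : ℝ} (hβ : 1 < β) {q p : ℝ} (hq : 0 < q) (hqp : q ≤ p) :
    p ^ (1 - β) ≤ q ^ (1 - β) := by
  have hp : 0 < p := lt_of_lt_of_le hq hqp
  rw [show (1 - β) = -(β - 1) by ring, Real.rpow_neg hq.le, Real.rpow_neg hp.le]
  exact inv_anti₀ (Real.rpow_pos_of_pos hq _)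
    (Real.rpow_le_rpow hq.le hqp (by linarith))

lemma rpow_anti' {c : ℝ} (hc : c ≤ 0) {q p : ℝ} (hq : 0 < q) (hqp : q ≤ p) :
    p ^ c ≤ q ^ c := by
  have hp : 0 < p := lt_of_lt_of_le hq hqp
  rw [show c = -(-c) by ring, Real.rpow_neg hq.le, Real.rpow_neg hp.le]
  exact inv_anti₀ (Real.rpow_pos_of_pos hq _)
    (Real.rpow_le_rpow hq.le hqp (by linarith))

lemma phi_mono_pos {β : ℝ} (hβ : 1 < β) {q p : ℝ} (hq : 0 < q) (hqp : q ≤ p) :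
    PhiCS β q ≤ PhiCS β p := by
  have hp : 0 < p := lt_of_lt_of_le hq hqp
  rw [phi_pos_eq hq, phi_pos_eq hp]
  have h := rpow_anti hβ hq hqp
  have hc : (0:ℝ) < β - 1 := by linarith
  exact (div_le_div_iff_of_pos_right hc).mpr (by linarith)

lemma phi_le_infty {β : ℝ} (hβ : 1 < β) {y : ℝ} (hy : 0 < y) :
    PhiCS β y ≤ 1 / (β - 1) := by
  rw [phi_pos_eq hy]
  have h := Real.rpow_pos_of_pos hy (1 - β)
  have hc : (0:ℝ) < β - 1 := by linarith
  exact (div_le_div_iff_of_pos_right hc).mpr (by linarith)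

lemma hasDerivAt_phiAux {β : ℝ} (hβ : 1 < β) {y : ℝ} (hy : 0 < y) :
    HasDerivAt (fun z : ℝ => (1 - z ^ (1 - β)) / (β - 1)) (y ^ (-β)) y := by
  have h := (Real.hasDerivAt_rpow_const (x := y) (p := 1 - β) (Or.inl hy.ne')).const_sub 1
  have h2 := h.div_const (β - 1)
  refine h2.congr_deriv (Eq.symm ?_)
  rw [show (1 - β - 1) = -β by ring]
  have hb : β - 1 ≠ 0 := by linarith
  rw [eq_div_iff hb]
  ring

lemma continuousAt_phi {β : ℝ} (hβ : 1 < β) {y : ℝ} (hy : 0 < y) :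
    ContinuousAt (PhiCS β) y := by
  have h : (PhiCS β) =ᶠ[𝓝 y] (fun z => (1 - z ^ (1 - β)) / (β - 1)) := by
    filter_upwards [Ioi_mem_nhds hy] with z hz
    exact phi_pos_eq hz
  exact ContinuousAt.congr ((hasDerivAt_phiAux hβ hy).continuousAt) h.symm

lemma phi_incr {β : ℝ} (hβ : 1 < β) {D q p : ℝ} (hq : 0 < q) (hqp : q ≤ p) (hpD : p ≤ D) :
    D ^ (-β) * (p - q) ≤ PhiCS β p - PhiCS β q := by
  rcases eq_or_lt_of_le hqp with rfl | hlt
  · simp only [sub_self, mul_zero, le_refl]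
  have hp : 0 < p := lt_of_lt_of_le hq hqp
  set f : ℝ → ℝ := fun z => (1 - z ^ (1 - β)) / (β - 1) with hf
  have hderiv : ∀ z ∈ Ioo q p, HasDerivAt f (z ^ (-β)) z := fun z hz =>
    hasDerivAt_phiAux hβ (hq.trans hz.1)
  have hcont : ContinuousOn f (Icc q p) := by
    intro z hz
    exact ((hasDerivAt_phiAux hβ (lt_of_lt_of_le hq hz.1)).continuousAt).continuousWithinAt
  obtain ⟨c, hc, hceq⟩ := exists_hasDerivAt_eq_slope f (fun z => z ^ (-β)) hlt hcont hderiv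
  have hcpos : 0 < c := hq.trans hc.1
  have hcD : c ≤ D := le_trans hc.2.le hpD
  have hbound : D ^ (-β) ≤ c ^ (-β) := rpow_anti' (by linarith) hcpos hcD
  rw [phi_pos_eq hq, phi_pos_eq hp]
  show D ^ (-β) * (p - q) ≤ f p - f q
  have hne : p - q ≠ 0 := (sub_pos.mpr hlt).ne'
  have heq : f p - f q = c ^ (-β) * (p - q) := by
    rw [hceq, div_mul_cancel₀ _ hne]
  rw [heq]
  exact mul_le_mul_of_nonneg_right hbound (sub_pos.mpr hlt).le

end CS12

namespace CS12b
open CS12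

lemma phi_mono_samesign {β : ℝ} (hβ : 1 < β) {q p : ℝ} (hqp : q ≤ p) (hsgn : 0 < p * q) :
    PhiCS β q ≤ PhiCS β p := by
  rcases lt_or_ge 0 q with hq | hq
  · exact phi_mono_pos hβ hq hqp
  · have hq' : q < 0 := by
      rcases eq_or_lt_of_le hq with rfl | h
      · simp at hsgn
      · exact h
    have hp' : p < 0 := by
      by_contra h
      push_neg at h
      nlinarith
    have := phi_mono_pos hβ (by linarith : (0:ℝ) < -p) (by linarith : -p ≤ -q)
    rw [phi_neg, phi_neg] at this
    linarith

lemma phi_incr_samesign {β : ℝ} (hβ : 1 < β) {D q p : ℝ} (hqp : q ≤ p) (hsgn : 0 < p * q)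
    (hqD : |q| ≤ D) (hpD : |p| ≤ D) :
    D ^ (-β) * (p - q) ≤ PhiCS β p - PhiCS β q := by
  rcases lt_or_ge 0 q with hq | hq
  · exact phi_incr hβ hq hqp (by rwa [abs_of_pos (lt_of_lt_of_le hq hqp)] at hpD)
  · have hq' : q < 0 := by
      rcases eq_or_lt_of_le hq with rfl | h
      · simp at hsgn
      · exact h
    have hp' : p < 0 := by
      by_contra h
      push_neg at h
      nlinarith
    have h2 := phi_incr (D := D) hβ (by linarith : (0:ℝ) < -p) (by linarith : -p ≤ -q)
      (by rwa [abs_of_neg hq'] at hqD)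
    rw [phi_neg, phi_neg] at h2
    linarith

lemma phi_small {β : ℝ} (hβ : 1 < β) (T : ℝ) :
    ∃ δ : ℝ, 0 < δ ∧ δ ≤ 1 ∧ PhiCS β δ < T := by
  have hb : (0:ℝ) < β - 1 := by linarith
  set A : ℝ := |1 - (β - 1) * T| + 1 with hA
  have hA1 : 1 ≤ A := le_add_of_nonneg_left (abs_nonneg _)
  have hApos : (0:ℝ) < A := by linarith
  have hexp : (-(1/(β-1))) * (1-β) = 1 := by field_simp; ring
  refine ⟨A ^ (-(1 / (β - 1))), Real.rpow_pos_of_pos hApos _, ?_, ?_⟩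
  · calc A ^ (-(1/(β-1))) ≤ A ^ (0:ℝ) := by
          apply Real.rpow_le_rpow_of_exponent_le hA1
          rw [neg_nonpos]
          positivity
      _ = 1 := Real.rpow_zero A
  · have hδ : (0:ℝ) < A ^ (-(1 / (β - 1))) := Real.rpow_pos_of_pos hApos _
    rw [phi_pos_eq hδ, ← Real.rpow_mul hApos.le, hexp, Real.rpow_one, div_lt_iff₀ hb]
    have h4 : 1 - (β - 1) * T ≤ |1 - (β - 1) * T| := le_abs_self _
    nlinarith

lemma phi_large {β : ℝ} (hβ : 1 < β) {ε : ℝ} (hε : 0 < ε) :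
    ∃ R : ℝ, 2 ≤ R ∧ ∀ y : ℝ, R ≤ y → 1 / (β - 1) - ε ≤ PhiCS β y := by
  have hb : (0:ℝ) < β - 1 := by linarith
  have hce : (0:ℝ) < (β - 1) * ε := by positivity
  have hexp : (-(1/(β-1))) * (1-β) = 1 := by field_simp; ring
  set R₀ : ℝ := ((β - 1) * ε) ^ (-(1/(β-1))) with hR₀def
  have hR₀ : 0 < R₀ := Real.rpow_pos_of_pos hce _
  refine ⟨max 2 R₀, le_max_left _ _, fun y hy => ?_⟩
  have hy0 : (0:ℝ) < y := lt_of_lt_of_le (by norm_num : (0:ℝ) < 2) ((le_max_left _ _).trans hy)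
  rw [phi_pos_eq hy0]
  have h1 : y ^ (1-β) ≤ R₀ ^ (1-β) := rpow_anti hβ hR₀ ((le_max_right _ _).trans hy)
  have h2 : R₀ ^ (1-β) = (β-1)*ε := by
    rw [hR₀def, ← Real.rpow_mul hce.le, hexp, Real.rpow_one]
  rw [le_div_iff₀ hb]
  have h3 : (1/(β-1))*(β-1) = 1 := by field_simp
  nlinarith

end CS12b

namespace CS12c
open CS12 CS12b

noncomputable def WCS (β y : ℝ) : ℝ := ∫ s in (1:ℝ)..|y|, PhiCS β s

lemma Wfun_eq (β : ℝ) : WCS β = fun y => (fun z => ∫ s in (1:ℝ)..z, PhiCS β s) |y| := rfl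

lemma hasDerivAt_V {β : ℝ} (hβ : 1 < β) {z : ℝ} (hz : 0 < z) :
    HasDerivAt (fun u => ∫ s in (1:ℝ)..u, PhiCS β s) (PhiCS β z) z := by
  have hsub : uIcc (1:ℝ) z ⊆ Ioi 0 := by
    intro w hw
    have := hw.1
    have h1 : min 1 z ≤ w := hw.1
    have : (0:ℝ) < min 1 z := lt_min one_pos hz
    exact lt_of_lt_of_le this h1
  have hcont : ContinuousOn (PhiCS β) (Ioi 0) := fun w hw =>
    (continuousAt_phi hβ hw).continuousWithinAt
  have hint : IntervalIntegrable (PhiCS β) MeasureTheory.volume 1 z :=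
    (hcont.mono hsub).intervalIntegrable
  have hmeas : StronglyMeasurableAtFilter (PhiCS β) (𝓝 z) MeasureTheory.volume :=
    hcont.stronglyMeasurableAtFilter isOpen_Ioi z hz
  exact intervalIntegral.integral_hasDerivAt_right hint hmeas (continuousAt_phi hβ hz)

lemma hasDerivAt_W {β : ℝ} (hβ : 1 < β) {y : ℝ} (hy : y ≠ 0) :
    HasDerivAt (WCS β) (PhiCS β y) y := by
  rcases hy.lt_or_gt with hneg | hpos
  · have h1 : HasDerivAt (fun u : ℝ => -u) (-1 : ℝ) y := (hasDerivAt_id y).neg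
    have h2 := (hasDerivAt_V hβ (by linarith : (0:ℝ) < -y)).comp y h1
    have heq : WCS β =ᶠ[𝓝 y] fun u => ∫ s in (1:ℝ)..(-u), PhiCS β s := by
      filter_upwards [Iio_mem_nhds hneg] with u hu
      rw [WCS, abs_of_neg hu]
    rw [show PhiCS β y = PhiCS β (-y) * (-1) by rw [phi_neg]; ring]
    exact HasDerivAt.congr_of_eventuallyEq h2 heq
  · have heq : WCS β =ᶠ[𝓝 y] fun u => ∫ s in (1:ℝ)..u, PhiCS β s := by
      filter_upwards [Ioi_mem_nhds hpos] with u hu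
      rw [WCS, abs_of_pos hu]
    exact HasDerivAt.congr_of_eventuallyEq (hasDerivAt_V hβ hpos) heq

end CS12c

namespace CS12d
open CS12 CS12b CS12c

lemma phi_sub (β p q : ℝ) : PhiCS β (p - q) = - PhiCS β (q - p) := by
  rw [show p - q = -(q - p) by ring, phi_neg]

variable (N : ℕ) (β κ : ℝ) (ν : Fin N → ℝ)

noncomputable def EE (a : Fin N → ℝ) : ℝ :=
  -(∑ i, ν i * a i) + (κ / (2 * N)) * ∑ i, ∑ k, WCS β (a k - a i)

noncomputable def gE (a : Fin N → ℝ) (i : Fin N) : ℝ :=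
  -(ν i) - (κ / N) * ∑ k, PhiCS β (a k - a i)

lemma L1 (a v : Fin N → ℝ) :
    ∑ i, ∑ k, (v k - v i) * PhiCS β (a k - a i)
      = -2 * ∑ i, v i * ∑ k, PhiCS β (a k - a i) := by
  have hA : ∑ i, ∑ k, v k * PhiCS β (a k - a i)
      = -∑ i, v i * ∑ k, PhiCS β (a k - a i) := by
    rw [Finset.sum_comm, ← Finset.sum_neg_distrib]
    refine Finset.sum_congr rfl fun i _ => ?_
    rw [Finset.mul_sum, ← Finset.sum_neg_distrib]
    refine Finset.sum_congr rfl fun k _ => ?_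
    rw [phi_sub]
    ring
  have expand : ∀ i k : Fin N, (v k - v i) * PhiCS β (a k - a i)
      = v k * PhiCS β (a k - a i) - v i * PhiCS β (a k - a i) := fun i k => by ring
  simp_rw [expand, Finset.sum_sub_distrib]
  rw [hA]
  simp_rw [← Finset.mul_sum]
  ring

lemma sum_phi_zero (a : Fin N → ℝ) (s : Finset (Fin N)) :
    ∑ i ∈ s, ∑ k ∈ s, PhiCS β (a k - a i) = 0 := by
  have h : ∑ i ∈ s, ∑ k ∈ s, PhiCS β (a k - a i)
      = -∑ i ∈ s, ∑ k ∈ s, PhiCS β (a k - a i) := by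
    conv_lhs => rw [Finset.sum_comm]
    rw [← Finset.sum_neg_distrib]
    refine Finset.sum_congr rfl fun i _ => ?_
    rw [← Finset.sum_neg_distrib]
    refine Finset.sum_congr rfl fun k _ => ?_
    rw [phi_sub]
  linarith

lemma sum_gE (hν : ∑ i, ν i = 0) (a : Fin N → ℝ) :
    ∑ i, gE N β κ ν a i = 0 := by
  unfold gE
  rw [Finset.sum_sub_distrib, Finset.sum_neg_distrib, hν, ← Finset.mul_sum,
    sum_phi_zero N β a Finset.univ]
  simp

lemma deriv_value (hN : (N:ℝ) ≠ 0) (a v : Fin N → ℝ) :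
    -(∑ i, ν i * v i) + (κ/(2*(N:ℝ))) * ∑ i, ∑ k, (v k - v i) * PhiCS β (a k - a i)
      = ∑ i, v i * gE N β κ ν a i := by
  rw [L1]
  have h : ∀ i, v i * gE N β κ ν a i
      = -(ν i * v i) - (κ/(N:ℝ)) * (v i * ∑ k, PhiCS β (a k - a i)) := by
    intro i; unfold gE; ring
  simp_rw [h, Finset.sum_sub_distrib, Finset.sum_neg_distrib, ← Finset.mul_sum]
  field_simp
  ring

lemma hasDerivWithinAt_EE (hβ : 1 < β) (hN : (N:ℝ) ≠ 0) {s : Set ℝ} {t : ℝ}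
    {y : ℝ → Fin N → ℝ} {v : Fin N → ℝ}
    (hy : ∀ i, HasDerivWithinAt (fun τ => y τ i) (v i) s t)
    (hsep : ∀ i k : Fin N, i ≠ k → y t i ≠ y t k) :
    HasDerivWithinAt (fun τ => EE N β κ ν (y τ)) (∑ i, v i * gE N β κ ν (y t) i) s t := by
  have hterm : ∀ i k : Fin N, HasDerivWithinAt (fun τ => WCS β (y τ k - y τ i))
      ((v k - v i) * PhiCS β (y t k - y t i)) s t := by
    intro i k
    by_cases hik : i = k
    · subst hik
      have heq : (fun τ => WCS β (y τ i - y τ i)) = fun _ => WCS β 0 := by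
        funext τ; rw [sub_self]
      rw [heq]
      have : (v i - v i) * PhiCS β (y t i - y t i) = 0 := by ring
      rw [this]
      exact hasDerivWithinAt_const t s (WCS β 0)
    · have hd : HasDerivWithinAt (fun τ => y τ k - y τ i) (v k - v i) s t :=
        (hy k).sub (hy i)
      have hW := hasDerivAt_W hβ (sub_ne_zero.mpr (hsep k i (fun h => hik h.symm)))
      have := hW.comp_hasDerivWithinAt t hd
      rw [mul_comm] at this
      exact this
  have hlin : HasDerivWithinAt (fun τ => -(∑ i, ν i * y τ i)) (-(∑ i, ν i * v i)) s t := by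
    apply HasDerivWithinAt.neg
    exact HasDerivWithinAt.fun_sum fun i _ => (hy i).const_mul (ν i)
  have hsum : HasDerivWithinAt (fun τ => ∑ i, ∑ k, WCS β (y τ k - y τ i))
      (∑ i, ∑ k, (v k - v i) * PhiCS β (y t k - y t i)) s t :=
    HasDerivWithinAt.fun_sum fun i _ => HasDerivWithinAt.fun_sum fun k _ => hterm i k
  have H := hlin.add (hsum.const_mul (κ/(2*(N:ℝ))))
  rw [deriv_value N β κ ν hN] at H
  exact H

end CS12d

section KEY
open CS12 CS12b CS12c CS12d

variable (N : ℕ) (β κ : ℝ) (ν : Fin N → ℝ)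

lemma key_ineq (hβ : 1 < β) (hκ : 0 < κ) (hN : 0 < (N:ℝ)) {M : ℝ} (hM : 0 < M)
    {a b : Fin N → ℝ} (ha : StrictMono a) (hb : StrictMono b)
    (haM : ∀ i, |a i| ≤ M) (hbM : ∀ i, |b i| ≤ M) :
    EE N β κ ν a + ∑ i, (b i - a i) * gE N β κ ν a i
      + (κ/(2*(N:ℝ))) * (2*M) ^ (-β) * (1/2) * (∑ i, ∑ k, ((b k - a k) - (b i - a i))^2)
      ≤ EE N β κ ν b := by
  set u : Fin N → ℝ := fun i => b i - a i with hu
  set ys : ℝ → Fin N → ℝ := fun s i => a i + s * u i with hys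
  set Q : ℝ := ∑ i, ∑ k, (u k - u i)^2 with hQ
  set c₀ : ℝ := (κ/(2*(N:ℝ))) * (2*M) ^ (-β) with hc₀
  have hc₀pos : 0 < c₀ := by
    have : (0:ℝ) < (2*M) ^ (-β) := Real.rpow_pos_of_pos (by linarith) _
    positivity
  have hQnn : 0 ≤ Q := Finset.sum_nonneg fun i _ => Finset.sum_nonneg fun k _ => sq_nonneg _
  -- interpolation is strictly monotone on [0,1]
  have h01mono : ∀ s ∈ Icc (0:ℝ) 1, StrictMono (ys s) := by
    intro s hs i j hij
    have hpa : 0 < a j - a i := sub_pos.mpr (ha hij)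
    have hpb : 0 < b j - b i := sub_pos.mpr (hb hij)
    have : ys s j - ys s i = (1 - s) * (a j - a i) + s * (b j - b i) := by
      simp only [hys, hu]; ring
    have hpos : 0 < ys s j - ys s i := by
      rw [this]
      rcases lt_or_ge s 1 with h1 | h1
      · have := mul_pos (by linarith : (0:ℝ) < 1 - s) hpa
        nlinarith [mul_nonneg hs.1 hpb.le]
      · have hs1 : s = 1 := le_antisymm hs.2 h1
        subst hs1
        simpa using hpb
    linarith
  -- gap bounds along the segment
  have hgap_bound : ∀ s ∈ Icc (0:ℝ) 1, ∀ i k : Fin N, |ys s k - ys s i| ≤ 2*M := by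
    intro s hs i k
    have : ys s k - ys s i = (1 - s) * (a k - a i) + s * (b k - b i) := by
      simp only [hys, hu]; ring
    rw [this]
    have h1 : |a k - a i| ≤ 2*M := by
      have := haM k; have := haM i
      rw [abs_sub_le_iff]; constructor <;> [skip; skip] <;> cases' abs_le.mp (haM k) with h h <;>
        cases' abs_le.mp (haM i) with h' h' <;> linarith
    have h2 : |b k - b i| ≤ 2*M := by
      cases' abs_le.mp (hbM k) with h h; cases' abs_le.mp (hbM i) with h' h'
      rw [abs_sub_le_iff]; constructor <;> linarith
    calc |(1 - s) * (a k - a i) + s * (b k - b i)|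
        ≤ |(1 - s) * (a k - a i)| + |s * (b k - b i)| := abs_add_le _ _
      _ = (1 - s) * |a k - a i| + s * |b k - b i| := by
          rw [abs_mul, abs_mul, abs_of_nonneg (by linarith [hs.2] : (0:ℝ) ≤ 1 - s),
            abs_of_nonneg hs.1]
      _ ≤ (1 - s) * (2*M) + s * (2*M) := by
          have h1s : (0:ℝ) ≤ 1 - s := by linarith [hs.2]
          have h0s : (0:ℝ) ≤ s := hs.1
          gcongr
      _ = 2*M := by ring
  -- the derivative function along the segment
  set φ : ℝ → ℝ := fun s => -(∑ i, ν i * u i)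
      + (κ/(2*(N:ℝ))) * ∑ i, ∑ k, (u k - u i) * PhiCS β (ys s k - ys s i) with hφ
  have hφval : ∀ s ∈ Icc (0:ℝ) 1, φ s = ∑ i, u i * gE N β κ ν (ys s) i := by
    intro s hs
    exact deriv_value N β κ ν hN.ne' (ys s) u
  -- full derivative of E along the segment at points of [0,1]
  have hEd : ∀ s ∈ Icc (0:ℝ) 1, HasDerivAt (fun τ => EE N β κ ν (ys τ)) (φ s) s := by
    intro s hs
    have hcomp : ∀ i : Fin N, HasDerivWithinAt (fun τ => ys τ i) (u i) Set.univ s := by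
      intro i
      have : HasDerivAt (fun τ : ℝ => a i + τ * u i) (u i) s := by
        simpa using ((hasDerivAt_id s).mul_const (u i)).const_add (a i)
      exact this.hasDerivWithinAt
    have hsep : ∀ i k : Fin N, i ≠ k → ys s i ≠ ys s k := fun i k hik =>
      (h01mono s hs).injective.ne hik
    have H := hasDerivWithinAt_EE N β κ ν hβ hN.ne' hcomp hsep
    rw [← hasDerivWithinAt_univ, hφval s hs]
    exact H
  -- monotonicity of φ with strong-convexity gain
  have hφmono : ∀ s₁ ∈ Icc (0:ℝ) 1, ∀ s₂ ∈ Icc (0:ℝ) 1, s₁ ≤ s₂ →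
      c₀ * (s₂ - s₁) * Q ≤ φ s₂ - φ s₁ := by
    intro s₁ hs₁ s₂ hs₂ h12
    have hterm : ∀ i k : Fin N,
        (2*M)^(-β) * (s₂ - s₁) * (u k - u i)^2
          ≤ (u k - u i) * PhiCS β (ys s₂ k - ys s₂ i)
            - (u k - u i) * PhiCS β (ys s₁ k - ys s₁ i) := by
      intro i k
      by_cases hik : i = k
      · subst hik; simp
      have hg : ∀ s : ℝ, ys s k - ys s i = (a k - a i) + s * (u k - u i) := by
        intro s; simp only [hys, hu]; ring
      have hsgn : 0 < (ys s₂ k - ys s₂ i) * (ys s₁ k - ys s₁ i) := by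
        rcases lt_or_gt_of_ne (fun h => hik h) with hlt | hgt
        · have h1 : 0 < ys s₁ k - ys s₁ i := sub_pos.mpr (h01mono s₁ hs₁ hlt)
          have h2 : 0 < ys s₂ k - ys s₂ i := sub_pos.mpr (h01mono s₂ hs₂ hlt)
          positivity
        · have h1 : 0 < ys s₁ i - ys s₁ k := sub_pos.mpr (h01mono s₁ hs₁ hgt)
          have h2 : 0 < ys s₂ i - ys s₂ k := sub_pos.mpr (h01mono s₂ hs₂ hgt)
          nlinarith
      have hb1 := hgap_bound s₁ hs₁ i k
      have hb2 := hgap_bound s₂ hs₂ i k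
      rcases le_or_gt 0 (u k - u i) with hd | hd
      · have hord : ys s₁ k - ys s₁ i ≤ ys s₂ k - ys s₂ i := by
          rw [hg, hg]; nlinarith
        have := phi_incr_samesign hβ hord hsgn hb1 hb2
        have hdiff : (ys s₂ k - ys s₂ i) - (ys s₁ k - ys s₁ i) = (s₂ - s₁) * (u k - u i) := by
          rw [hg, hg]; ring
        rw [hdiff] at this
        nlinarith
      · have hord : ys s₂ k - ys s₂ i ≤ ys s₁ k - ys s₁ i := by
          rw [hg, hg]; nlinarith
        have hsgn' : 0 < (ys s₁ k - ys s₁ i) * (ys s₂ k - ys s₂ i) := by linarith [hsgn]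
        have := phi_incr_samesign hβ hord hsgn' hb2 hb1
        have hdiff : (ys s₁ k - ys s₁ i) - (ys s₂ k - ys s₂ i) = (s₂ - s₁) * (u i - u k) := by
          rw [hg, hg]; ring
        rw [hdiff] at this
        nlinarith
    have hsum : (2*M)^(-β) * (s₂ - s₁) * Q
        ≤ ∑ i, ∑ k, ((u k - u i) * PhiCS β (ys s₂ k - ys s₂ i)
            - (u k - u i) * PhiCS β (ys s₁ k - ys s₁ i)) := by
      rw [hQ, Finset.mul_sum]
      apply Finset.sum_le_sum
      intro i _
      rw [Finset.mul_sum]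
      exact Finset.sum_le_sum fun k _ => hterm i k
    have hsplit : φ s₂ - φ s₁ = (κ/(2*(N:ℝ))) * ∑ i, ∑ k,
        ((u k - u i) * PhiCS β (ys s₂ k - ys s₂ i)
          - (u k - u i) * PhiCS β (ys s₁ k - ys s₁ i)) := by
      simp only [hφ]
      have hr : ∀ X Y : ℝ,
          (-(∑ i, ν i * u i) + (κ/(2*(N:ℝ))) * X)
            - (-(∑ i, ν i * u i) + (κ/(2*(N:ℝ))) * Y) = (κ/(2*(N:ℝ))) * (X - Y) :=
        fun X Y => by ring
      rw [hr, ← Finset.sum_sub_distrib]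
      congr 1
      exact Finset.sum_congr rfl fun i _ => (Finset.sum_sub_distrib _ _).symm
    rw [hsplit, hc₀]
    have hκN : 0 ≤ κ/(2*(N:ℝ)) := by positivity
    calc (κ/(2*(N:ℝ))) * (2*M)^(-β) * (s₂ - s₁) * Q
        = (κ/(2*(N:ℝ))) * ((2*M)^(-β) * (s₂ - s₁) * Q) := by ring
      _ ≤ (κ/(2*(N:ℝ))) * ∑ i, ∑ k,
            ((u k - u i) * PhiCS β (ys s₂ k - ys s₂ i)
              - (u k - u i) * PhiCS β (ys s₁ k - ys s₁ i)) :=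
          mul_le_mul_of_nonneg_left hsum hκN
  -- now integrate: ψ is monotone on [0,1]
  set ψ : ℝ → ℝ := fun s => EE N β κ ν (ys s) - s * φ 0 - s^2 * (c₀ * Q) / 2 with hψ
  have hψd : ∀ s ∈ Icc (0:ℝ) 1, HasDerivAt ψ (φ s - φ 0 - s * (c₀ * Q)) s := by
    intro s hs
    have h1 : HasDerivAt (fun τ : ℝ => τ * φ 0) (φ 0) s := by
      simpa using (hasDerivAt_id s).mul_const (φ 0)
    have h2 : HasDerivAt (fun τ : ℝ => τ^2 * (c₀ * Q) / 2) (s * (c₀ * Q)) s := by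
      have := ((hasDerivAt_pow 2 s).mul_const (c₀ * Q)).div_const 2
      refine this.congr_deriv ?_
      ring
    exact ((hEd s hs).sub h1).sub h2
  have hmono : MonotoneOn ψ (Icc (0:ℝ) 1) := by
    apply monotoneOn_of_deriv_nonneg (convex_Icc 0 1)
    · exact fun s hs => (hψd s hs).continuousAt.continuousWithinAt
    · rw [interior_Icc]
      exact fun s hs =>
        (hψd s (Ioo_subset_Icc_self hs)).differentiableAt.differentiableWithinAt
    · rw [interior_Icc]
      intro s hs
      rw [(hψd s (Ioo_subset_Icc_self hs)).deriv]
      have hm := hφmono 0 (by constructor <;> norm_num) s (Ioo_subset_Icc_self hs) hs.1.le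
      have : c₀ * (s - 0) * Q = s * (c₀ * Q) := by ring
      linarith
  have hfin := hmono (by constructor <;> norm_num : (0:ℝ) ∈ Icc (0:ℝ) 1)
    (by constructor <;> norm_num : (1:ℝ) ∈ Icc (0:ℝ) 1) zero_le_one
  have hys0 : ys 0 = a := funext fun i => by simp [hys]
  have hys1 : ys 1 = b := funext fun i => by simp [hys, hu]
  have hψ0 : ψ 0 = EE N β κ ν a := by simp [hψ, hys0]
  have hψ1 : ψ 1 = EE N β κ ν b - φ 0 - (c₀ * Q) / 2 := by
    simp [hψ, hys1]
  have hφ0 : φ 0 = ∑ i, (b i - a i) * gE N β κ ν a i := by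
    have := hφval 0 (by constructor <;> norm_num)
    rw [hys0] at this
    exact this
  rw [hψ0, hψ1] at hfin
  rw [← hφ0]
  linarith
end KEY

section COMB
open CS12 CS12b CS12c CS12d Finset

variable (N : ℕ) (β κ : ℝ) (ν : Fin N → ℝ)

lemma Qid (u : Fin N → ℝ) (hu : ∑ i, u i = 0) :
    ∑ i, ∑ k, (u k - u i)^2 = 2*(N:ℝ)*∑ i, (u i)^2 := by
  have inner : ∀ i : Fin N, ∑ k, (u k - u i)^2 = (∑ k, (u k)^2) + (N:ℝ)*(u i)^2 := by
    intro i
    have h : ∀ k : Fin N, (u k - u i)^2 = (u k)^2 - (2*u i)*u k + (u i)^2 := fun k => by ring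
    simp_rw [h, Finset.sum_add_distrib, Finset.sum_sub_distrib, ← Finset.mul_sum, hu,
      mul_zero, sub_zero, Finset.sum_const, Finset.card_univ, Fintype.card_fin, nsmul_eq_mul]
  calc ∑ i, ∑ k, (u k - u i)^2 = ∑ i : Fin N, ((∑ k, (u k)^2) + (N:ℝ)*(u i)^2) :=
        Finset.sum_congr rfl fun i _ => inner i
    _ = (N:ℝ)*(∑ k, (u k)^2) + (N:ℝ)*∑ i, (u i)^2 := by
        rw [Finset.sum_add_distrib, Finset.sum_const, Finset.card_univ, Fintype.card_fin,
          nsmul_eq_mul, ← Finset.mul_sum]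
    _ = 2*(N:ℝ)*∑ i, (u i)^2 := by ring

lemma card_filter_range (m l : ℕ) : ((Finset.range m).filter (fun n => l ≤ n)).card = m - l := by
  induction m with
  | zero => simp
  | succ m ih =>
    rw [Finset.range_add_one, Finset.filter_insert]
    by_cases h : l ≤ m
    · rw [if_pos h, Finset.card_insert_of_notMem (by simp), ih]
      omega
    · rw [if_neg h, ih]
      omega

lemma card_T (l : ℕ) :
    ((Finset.univ : Finset (Fin N)).filter (fun k : Fin N => l ≤ (k:ℕ))).card = N - l := by
  have h1 : ((Finset.univ : Finset (Fin N)).filter (fun k : Fin N => l ≤ (k:ℕ))).card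
      = ∑ k : Fin N, if l ≤ (k:ℕ) then 1 else 0 := Finset.card_filter _ _
  rw [h1, Fin.sum_univ_eq_sum_range (fun n => if l ≤ n then 1 else 0) N,
    ← Finset.card_filter, card_filter_range]

lemma card_S (l : ℕ) (hl : l ≤ N) :
    ((Finset.univ : Finset (Fin N)).filter (fun k : Fin N => (k:ℕ) < l)).card = l := by
  have h1 : ((Finset.univ : Finset (Fin N)).filter (fun k : Fin N => ¬ l ≤ (k:ℕ))).card
      = N - (N - l) := by
    have := Finset.card_filter_add_card_filter_not
      (s := (Finset.univ : Finset (Fin N))) (p := fun k : Fin N => l ≤ (k:ℕ))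
    rw [card_T] at this
    simp only [Finset.card_univ, Fintype.card_fin] at this
    omega
  have h2 : (Finset.univ.filter (fun k : Fin N => (k:ℕ) < l))
      = (Finset.univ.filter (fun k : Fin N => ¬ l ≤ (k:ℕ))) :=
    Finset.filter_congr fun k _ => by simp [not_le]
  rw [h2, h1]
  omega

-- sum over T_l splits off the element with value l
lemma sum_T_split (g : Fin N → ℝ) (l : ℕ) (hl : l < N) :
    ∑ k ∈ Finset.univ.filter (fun k : Fin N => l ≤ (k:ℕ)), g k
      = g ⟨l, hl⟩ + ∑ k ∈ Finset.univ.filter (fun k : Fin N => l + 1 ≤ (k:ℕ)), g k := by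
  have hmem : (⟨l, hl⟩ : Fin N) ∈ Finset.univ.filter (fun k : Fin N => l ≤ (k:ℕ)) := by
    simp
  have hset : (Finset.univ.filter (fun k : Fin N => l ≤ (k:ℕ))).erase ⟨l, hl⟩
      = Finset.univ.filter (fun k : Fin N => l + 1 ≤ (k:ℕ)) := by
    ext k
    simp only [Finset.mem_erase, Finset.mem_filter, Finset.mem_univ, true_and]
    constructor
    · rintro ⟨hne, hle⟩
      have : (k:ℕ) ≠ l := fun h => hne (Fin.ext h)
      omega
    · intro h
      have hv : (k:ℕ) ≠ l := by omega
      exact ⟨fun he => hv (by rw [he]), by omega⟩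
  rw [← Finset.add_sum_erase _ g hmem, hset]

lemma consecutive_bound {a : Fin N → ℝ} {c C : ℝ} (hc : 0 ≤ c) (hC : 0 ≤ C)
    (h : ∀ i j : Fin N, (j:ℕ) = (i:ℕ)+1 → c ≤ a j - a i ∧ a j - a i ≤ C) :
    ∀ i j : Fin N, i < j → c ≤ a j - a i ∧ a j - a i ≤ (N:ℝ)*C := by
  have key : ∀ d : ℕ, ∀ i j : Fin N, (j:ℕ) = (i:ℕ) + 1 + d →
      c ≤ a j - a i ∧ a j - a i ≤ ((d:ℝ)+1)*C := by
    intro d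
    induction d with
    | zero =>
      intro i j hij
      have h2 := h i j (by omega)
      refine ⟨h2.1, ?_⟩
      push_cast
      linarith [h2.2]
    | succ d ih =>
      intro i j hij
      have hj : (j:ℕ) < N := j.2
      have hlt : (i:ℕ) + 1 + d < N := by omega
      set j' : Fin N := ⟨(i:ℕ) + 1 + d, hlt⟩ with hj'
      have h1 := ih i j' rfl
      have h2 := h j' j (by simp [hj']; omega)
      push_cast
      constructor
      · linarith [h1.1, h2.1]
      · linarith [h1.2, h2.2]
  intro i j hij
  have hd : (j:ℕ) = (i:ℕ) + 1 + ((j:ℕ) - (i:ℕ) - 1) := by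
    have := (Fin.lt_def).mp hij
    omega
  obtain ⟨h1, h2⟩ := key _ i j hd
  refine ⟨h1, le_trans h2 ?_⟩
  have hdN : ((j:ℕ) - (i:ℕ) - 1 : ℕ) + 1 ≤ N := by omega
  have : (((j:ℕ) - (i:ℕ) - 1 : ℕ) : ℝ) + 1 ≤ (N:ℝ) := by exact_mod_cast hdN
  nlinarith

end COMB

section DDSEC
open CS12 CS12b CS12c CS12d Finset

variable (N : ℕ) (β κ : ℝ) (ν : Fin N → ℝ)

lemma DD_formula (hν : ∑ i, ν i = 0) (a : Fin N → ℝ) (l : ℕ) :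
    ∑ k ∈ Finset.univ.filter (fun k : Fin N => l ≤ (k:ℕ)), gE N β κ ν a k
      = (∑ m ∈ Finset.univ.filter (fun m : Fin N => (m:ℕ) < l), ν m)
        + (κ/(N:ℝ)) * ∑ k ∈ Finset.univ.filter (fun k : Fin N => l ≤ (k:ℕ)),
            ∑ m ∈ Finset.univ.filter (fun m : Fin N => (m:ℕ) < l), PhiCS β (a k - a m) := by
  classical
  set T := Finset.univ.filter (fun k : Fin N => l ≤ (k:ℕ)) with hT
  set S := Finset.univ.filter (fun m : Fin N => (m:ℕ) < l) with hS
  have hTS : Finset.univ.filter (fun m : Fin N => ¬ l ≤ (m:ℕ)) = S :=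
    Finset.filter_congr fun k _ => by simp [not_le]
  have hsplitν : (∑ m ∈ T, ν m) + (∑ m ∈ S, ν m) = 0 := by
    rw [← hTS, Finset.sum_filter_add_sum_filter_not, hν]
  have hsplitΦ : ∀ k : Fin N, (∑ m, PhiCS β (a m - a k))
      = (∑ m ∈ T, PhiCS β (a m - a k)) + ∑ m ∈ S, PhiCS β (a m - a k) := by
    intro k
    rw [← hTS, Finset.sum_filter_add_sum_filter_not]
  have step1 : ∀ k : Fin N, gE N β κ ν a k
      = -ν k - (κ/(N:ℝ))*(∑ m ∈ T, PhiCS β (a m - a k))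
        - (κ/(N:ℝ))*(∑ m ∈ S, PhiCS β (a m - a k)) := by
    intro k
    unfold gE
    rw [hsplitΦ k]
    ring
  rw [show (∑ k ∈ T, gE N β κ ν a k)
      = ∑ k ∈ T, (-ν k - (κ/(N:ℝ))*(∑ m ∈ T, PhiCS β (a m - a k))
        - (κ/(N:ℝ))*(∑ m ∈ S, PhiCS β (a m - a k)))
    from Finset.sum_congr rfl fun k _ => step1 k]
  rw [Finset.sum_sub_distrib, Finset.sum_sub_distrib, Finset.sum_neg_distrib,
    ← Finset.mul_sum, ← Finset.mul_sum]
  have hzero : ∑ k ∈ T, ∑ m ∈ T, PhiCS β (a m - a k) = 0 := sum_phi_zero N β a T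
  have hflip : ∑ k ∈ T, ∑ m ∈ S, PhiCS β (a m - a k)
      = -∑ k ∈ T, ∑ m ∈ S, PhiCS β (a k - a m) := by
    rw [← Finset.sum_neg_distrib]
    refine Finset.sum_congr rfl fun k _ => ?_
    rw [← Finset.sum_neg_distrib]
    exact Finset.sum_congr rfl fun m _ => by rw [phi_sub]
  rw [hzero, hflip]
  have : ∑ m ∈ T, ν m = -∑ m ∈ S, ν m := by linarith
  rw [this]
  ring

lemma gE_zero_of_DD (hν : ∑ i, ν i = 0) (hN2 : 2 ≤ N) (a : Fin N → ℝ)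
    (h0 : ∑ i, gE N β κ ν a i = 0)
    (hl : ∀ l : ℕ, 1 ≤ l → l ≤ N - 1 →
      ∑ k ∈ Finset.univ.filter (fun k : Fin N => l ≤ (k:ℕ)), gE N β κ ν a k = 0) :
    ∀ i, gE N β κ ν a i = 0 := by
  classical
  set D : ℕ → ℝ := fun l => ∑ k ∈ Finset.univ.filter (fun k : Fin N => l ≤ (k:ℕ)),
    gE N β κ ν a k with hD
  have hD0 : D 0 = 0 := by
    have : Finset.univ.filter (fun k : Fin N => 0 ≤ (k:ℕ)) = Finset.univ :=
      Finset.filter_true_of_mem fun _ _ => Nat.zero_le _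
    simp only [hD, this]
    exact h0
  have hDN : ∀ l : ℕ, N ≤ l → D l = 0 := by
    intro l hNl
    have : Finset.univ.filter (fun k : Fin N => l ≤ (k:ℕ)) = ∅ :=
      Finset.filter_false_of_mem fun k _ => by have := k.2; omega
    simp [hD, this]
  have hDall : ∀ l : ℕ, D l = 0 := by
    intro l
    rcases Nat.eq_zero_or_pos l with rfl | hpos
    · exact hD0
    rcases le_or_gt N l with h | h
    · exact hDN l h
    · exact hl l hpos (by omega)
  intro i
  have hsplit := sum_T_split N (gE N β κ ν a) (i:ℕ) i.2
  have h1 := hDall (i:ℕ)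
  have h2 := hDall ((i:ℕ)+1)
  simp only [hD] at h1 h2
  rw [hsplit, h2] at h1
  simpa using h1

end DDSEC

section MINI
open CS12 CS12b CS12c CS12d Finset

lemma sum_range_cast (m : ℕ) : (∑ n ∈ Finset.range m, (n:ℝ)) = (m:ℝ)*((m:ℝ)-1)/2 := by
  induction m with
  | zero => simp
  | succ m ih =>
    rw [Finset.sum_range_succ, ih]
    push_cast
    ring

variable (N : ℕ) (β κ : ℝ) (ν : Fin N → ℝ)

set_option maxHeartbeats 2000000 in
lemma exists_critical (hN2 : 2 ≤ N) (hβ : 1 < β) (hκ : 0 < κ) (hν : ∑ i, ν i = 0)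
    (hsup : ∀ l : ℕ, 1 ≤ l → l ≤ N - 1 →
      0 < (∑ m ∈ Finset.univ.filter (fun m : Fin N => (m:ℕ) < l), ν m)
        + (κ/(N:ℝ)) * ((l:ℝ)*((N:ℝ)-(l:ℝ))) * (1/(β-1))) :
    ∃ xs : Fin N → ℝ, StrictMono xs ∧ (∑ i, xs i = 0) ∧ ∀ i, gE N β κ ν xs i = 0 := by
  classical
  have hNR : (0:ℝ) < (N:ℝ) := by
    have : (2:ℝ) ≤ (N:ℝ) := by exact_mod_cast hN2
    linarith
  have hNR2 : (2:ℝ) ≤ (N:ℝ) := by exact_mod_cast hN2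
  have hb : (0:ℝ) < β - 1 := by linarith
  set Φinf : ℝ := 1/(β-1) with hΦinf
  have hΦpos : 0 < Φinf := by positivity
  set B : ℝ := ∑ i, |ν i| with hB
  have hσB : ∀ l : ℕ, (∑ m ∈ Finset.univ.filter (fun m : Fin N => (m:ℕ) < l), ν m) ≤ B := by
    intro l
    calc (∑ m ∈ Finset.univ.filter (fun m : Fin N => (m:ℕ) < l), ν m)
        ≤ ∑ m ∈ Finset.univ.filter (fun m : Fin N => (m:ℕ) < l), |ν m| :=
          Finset.sum_le_sum fun m _ => le_abs_self _
      _ ≤ B := Finset.sum_le_sum_of_subset_of_nonneg (Finset.filter_subset _ _)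
          fun m _ _ => abs_nonneg _
  set F : ℕ → ℝ := fun l => (∑ m ∈ Finset.univ.filter (fun m : Fin N => (m:ℕ) < l), ν m)
    + (κ/(N:ℝ)) * ((l:ℝ)*((N:ℝ)-(l:ℝ))) * Φinf with hF
  have hIccne : (Finset.Icc 1 (N-1)).Nonempty := ⟨1, by rw [Finset.mem_Icc]; omega⟩
  set η : ℝ := (Finset.Icc 1 (N-1)).inf' hIccne F with hη
  have hηpos : 0 < η := by
    rw [hη, Finset.lt_inf'_iff]
    intro l hlmem
    rw [Finset.mem_Icc] at hlmem
    exact hsup l hlmem.1 hlmem.2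
  have hηle : ∀ l : ℕ, 1 ≤ l → l ≤ N - 1 → η ≤ F l := fun l h1 h2 =>
    Finset.inf'_le F (Finset.mem_Icc.mpr ⟨h1, h2⟩)
  set ε : ℝ := η/(2*κ*(N:ℝ)) with hε
  have hεpos : 0 < ε := by positivity
  obtain ⟨R, hR2, hRΦ⟩ := phi_large hβ hεpos
  set T₀ : ℝ := -((N:ℝ)/κ)*(B+1) - 2*(N:ℝ)^2*Φinf with hT₀
  obtain ⟨δ₀, hδpos, hδ1, hδT⟩ := phi_small hβ T₀
  have hδR : δ₀ < R := by linarith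
  set K : Set (Fin N → ℝ) := {a | (∑ i, a i = 0) ∧
    ∀ i j : Fin N, (j:ℕ) = (i:ℕ)+1 → δ₀ ≤ a j - a i ∧ a j - a i ≤ R} with hKdef
  have hRpos : (0:ℝ) < R := by linarith
  have hKgap : ∀ a ∈ K, ∀ i j : Fin N, i < j → δ₀ ≤ a j - a i ∧ a j - a i ≤ (N:ℝ)*R :=
    fun a ha => consecutive_bound N hδpos.le hRpos.le ha.2
  have hKmono : ∀ a ∈ K, StrictMono a := by
    intro a ha i j hij
    have := (hKgap a ha i j hij).1
    linarith
  -- K is compact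
  have hKbound : ∀ a ∈ K, ∀ i, |a i| ≤ (N:ℝ)*R := by
    intro a ha i
    haveI : Nonempty (Fin N) := Fin.pos_iff_nonempty.mp (by omega)
    have hex : ∃ i₀, a i₀ ≤ 0 := by
      by_contra h
      push_neg at h
      have := Finset.sum_pos (fun i _ => h i) Finset.univ_nonempty
      rw [ha.1] at this
      exact lt_irrefl 0 this
    have hex' : ∃ j₀, 0 ≤ a j₀ := by
      by_contra h
      push_neg at h
      have := Finset.sum_lt_sum_of_nonempty Finset.univ_nonempty (fun i _ => h i)
      simp [ha.1] at this
    obtain ⟨i₀, hi₀⟩ := hex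
    obtain ⟨j₀, hj₀⟩ := hex'
    rw [abs_le]
    constructor
    · rcases lt_trichotomy i j₀ with h | h | h
      · have := (hKgap a ha i j₀ h).2
        linarith
      · subst h; nlinarith
      · have := hKmono a ha h
        nlinarith
    · rcases lt_trichotomy i₀ i with h | h | h
      · have := (hKgap a ha i₀ i h).2
        linarith
      · subst h; nlinarith
      · have := hKmono a ha h
        nlinarith
  have hKclosed : IsClosed K := by
    have h1 : IsClosed {a : Fin N → ℝ | ∑ i, a i = 0} :=
      isClosed_eq (continuous_finset_sum _ fun i _ => continuous_apply i) continuous_const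
    have h2 : IsClosed {a : Fin N → ℝ |
        ∀ i j : Fin N, (j:ℕ) = (i:ℕ)+1 → δ₀ ≤ a j - a i ∧ a j - a i ≤ R} := by
      rw [Set.setOf_forall]
      refine isClosed_iInter fun i => ?_
      rw [Set.setOf_forall]
      refine isClosed_iInter fun j => ?_
      by_cases hc : (j:ℕ) = (i:ℕ)+1
      · have : {a : Fin N → ℝ | (j:ℕ) = (i:ℕ)+1 → δ₀ ≤ a j - a i ∧ a j - a i ≤ R}
            = (fun a : Fin N → ℝ => a j - a i) ⁻¹' (Set.Icc δ₀ R) := by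
          ext a
          simp [hc, Set.mem_Icc]
        rw [this]
        exact isClosed_Icc.preimage ((continuous_apply j).sub (continuous_apply i))
      · have : {a : Fin N → ℝ | (j:ℕ) = (i:ℕ)+1 → δ₀ ≤ a j - a i ∧ a j - a i ≤ R}
            = Set.univ := by
          ext a
          simp [hc]
        rw [this]
        exact isClosed_univ
    have : K = {a : Fin N → ℝ | ∑ i, a i = 0} ∩ {a : Fin N → ℝ |
        ∀ i j : Fin N, (j:ℕ) = (i:ℕ)+1 → δ₀ ≤ a j - a i ∧ a j - a i ≤ R} := rfl
    rw [this]
    exact h1.inter h2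
  have hKcompact : IsCompact K := by
    apply (isCompact_closedBall (0 : Fin N → ℝ) ((N:ℝ)*R)).of_isClosed_subset hKclosed
    intro a ha
    rw [Metric.mem_closedBall]
    rw [dist_pi_le_iff (by positivity)]
    intro i
    rw [Real.dist_eq, Pi.zero_apply, sub_zero]
    exact hKbound a ha i
  have hKne : K.Nonempty := by
    refine ⟨fun i => δ₀*((i:ℕ):ℝ) - δ₀*((N:ℝ)-1)/2, ?_, ?_⟩
    · rw [Finset.sum_sub_distrib, ← Finset.mul_sum, Finset.sum_const, Finset.card_univ,
        Fintype.card_fin, nsmul_eq_mul]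
      rw [Fin.sum_univ_eq_sum_range (fun n => (n:ℝ)) N, sum_range_cast]
      ring
    · intro i j hij
      have : δ₀*((j:ℕ):ℝ) - δ₀*((N:ℝ)-1)/2 - (δ₀*((i:ℕ):ℝ) - δ₀*((N:ℝ)-1)/2) = δ₀ := by
        rw [hij]
        push_cast
        ring
      rw [this]
      exact ⟨le_refl _, hδR.le⟩
  -- continuity of the energy on K
  have hEcont : ContinuousOn (EE N β κ ν) K := by
    apply ContinuousOn.add
    · exact (Continuous.neg (continuous_finset_sum _ fun i _ =>
        continuous_const.mul (continuous_apply i))).continuousOn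
    · apply ContinuousOn.mul continuousOn_const
      apply continuousOn_finset_sum
      intro i _
      apply continuousOn_finset_sum
      intro k _
      by_cases hik : i = k
      · subst hik
        have : (fun a : Fin N → ℝ => WCS β (a i - a i)) = fun _ => WCS β 0 := by
          funext a; rw [sub_self]
        rw [this]
        exact continuousOn_const
      · intro a ha
        have hne : a k - a i ≠ 0 := sub_ne_zero.mpr ((hKmono a ha).injective.ne
          fun h => hik h.symm)
        have hg : ContinuousAt (fun a : Fin N → ℝ => a k - a i) a :=
          ((continuous_apply k).sub (continuous_apply i)).continuousAt
        have hw : ContinuousAt (WCS β) (a k - a i) := (hasDerivAt_W hβ hne).continuousAt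
        exact (ContinuousAt.comp (g := WCS β) (f := fun x : Fin N → ℝ => x k - x i) hw hg).continuousWithinAt
  obtain ⟨xs, hxsK, hxsmin⟩ := hKcompact.exists_isMinOn hKne hEcont
  have hxsmono : StrictMono xs := hKmono xs hxsK
  refine ⟨xs, hxsmono, hxsK.1, ?_⟩
  apply gE_zero_of_DD N β κ ν hν hN2 xs (sum_gE N β κ ν hν xs)
  intro l hl1 hlN
  have hlltN : l < N := by omega
  have hl1N : l - 1 < N := by omega
  set il : Fin N := ⟨l-1, hl1N⟩ with hil
  set jl : Fin N := ⟨l, hlltN⟩ with hjl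
  have hconsec : (jl:ℕ) = (il:ℕ) + 1 := by simp [hil, hjl]; omega
  obtain ⟨hγlb, hγub⟩ := hxsK.2 il jl hconsec
  set w : Fin N → ℝ := fun k => (if l ≤ (k:ℕ) then (1:ℝ) else 0) - ((N:ℝ)-(l:ℝ))/(N:ℝ) with hw
  have hwsum : ∑ k, w k = 0 := by
    simp only [hw]
    rw [Finset.sum_sub_distrib, Finset.sum_boole, card_T, Finset.sum_const,
      Finset.card_univ, Fintype.card_fin, nsmul_eq_mul, Nat.cast_sub (by omega : l ≤ N)]
    field_simp
    ring
  have hwd : ∀ i j : Fin N, (j:ℕ) = (i:ℕ)+1 → w j - w i = (if (j:ℕ) = l then (1:ℝ) else 0) := by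
    intro i j hij
    by_cases h1 : l ≤ (i:ℕ)
    · have h2 : l ≤ (j:ℕ) := by omega
      have h3 : ¬ ((j:ℕ) = l) := by omega
      simp [hw, h1, h2, h3]
    · by_cases h2 : l ≤ (j:ℕ)
      · have h3 : (j:ℕ) = l := by omega
        simp [hw, h1, h2, h3]
      · have h3 : ¬ ((j:ℕ) = l) := by omega
        simp [hw, h1, h2, h3]
  set ys : ℝ → Fin N → ℝ := fun s k => xs k + s * w k with hys
  have hys0 : ys 0 = xs := funext fun k => by simp [hys]
  set DDl : ℝ := ∑ k ∈ Finset.univ.filter (fun k : Fin N => l ≤ (k:ℕ)), gE N β κ ν xs k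
    with hDDl
  have hd : HasDerivAt (fun s => EE N β κ ν (ys s)) DDl 0 := by
    have hcomp : ∀ i : Fin N, HasDerivWithinAt (fun τ => ys τ i) (w i) Set.univ 0 := by
      intro i
      have h : HasDerivAt (fun τ : ℝ => xs i + τ * w i) (w i) 0 := by
        simpa using ((hasDerivAt_id (0:ℝ)).mul_const (w i)).const_add (xs i)
      exact h.hasDerivWithinAt
    have hsep : ∀ i k : Fin N, i ≠ k → ys 0 i ≠ ys 0 k := by
      intro i k hik
      rw [hys0]
      exact hxsmono.injective.ne hik
    have H := hasDerivWithinAt_EE N β κ ν hβ hNR.ne' hcomp hsep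
    rw [hys0] at H
    have hval : (∑ i, w i * gE N β κ ν xs i) = DDl := by
      have h1 : ∀ i ∈ Finset.univ, w i * gE N β κ ν xs i
          = (if l ≤ (i:ℕ) then gE N β κ ν xs i else 0)
            - ((N:ℝ)-(l:ℝ))/(N:ℝ) * gE N β κ ν xs i := by
        intro i _
        by_cases h : l ≤ (i:ℕ) <;> simp only [hw, if_pos, if_neg, h, if_true, if_false] <;> ring
      rw [Finset.sum_congr rfl h1, Finset.sum_sub_distrib, ← Finset.sum_filter,
        ← Finset.mul_sum, sum_gE N β κ ν hν xs, mul_zero, sub_zero, hDDl]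
    rw [hval] at H
    rw [← hasDerivWithinAt_univ]
    exact H
  have hgapys : ∀ s : ℝ, ∀ i j : Fin N, (j:ℕ) = (i:ℕ)+1 →
      ys s j - ys s i = (xs j - xs i) + s * (if (j:ℕ) = l then (1:ℝ) else 0) := by
    intro s i j hij
    have h := hwd i j hij
    simp only [hys]
    rw [show xs j + s*w j - (xs i + s*w i) = (xs j - xs i) + s*(w j - w i) by ring, h]
  have hsumys : ∀ s : ℝ, ∑ i, ys s i = 0 := by
    intro s
    simp only [hys]
    rw [Finset.sum_add_distrib, hxsK.1, ← Finset.mul_sum, hwsum, mul_zero, add_zero]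
  have hmem : ∀ s : ℝ, δ₀ ≤ (xs jl - xs il) + s → (xs jl - xs il) + s ≤ R → ys s ∈ K := by
    intro s hs1 hs2
    refine ⟨hsumys s, ?_⟩
    intro i j hij
    rw [hgapys s i j hij]
    by_cases hjeq : (j:ℕ) = l
    · rw [if_pos hjeq, mul_one]
      have hi : i = il := Fin.ext (by simp [hil]; omega)
      have hj : j = jl := Fin.ext (by simp [hjl]; omega)
      rw [hi, hj]
      exact ⟨hs1, hs2⟩
    · rw [if_neg hjeq, mul_zero, add_zero]
      exact hxsK.2 i j hij
  have hstrad_pos : ∀ k ∈ Finset.univ.filter (fun k : Fin N => l ≤ (k:ℕ)),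
      ∀ m ∈ Finset.univ.filter (fun m : Fin N => (m:ℕ) < l), 0 < xs k - xs m := by
    intro k hk m hm
    rw [Finset.mem_filter] at hk hm
    have : m < k := by rw [Fin.lt_def]; omega
    exact sub_pos.mpr (hxsmono this)
  have hform := DD_formula N β κ ν hν xs l
  rw [← hDDl] at hform
  set SS : ℝ := ∑ k ∈ Finset.univ.filter (fun k : Fin N => l ≤ (k:ℕ)),
      ∑ m ∈ Finset.univ.filter (fun m : Fin N => (m:ℕ) < l), PhiCS β (xs k - xs m) with hSS
  set σl : ℝ := ∑ m ∈ Finset.univ.filter (fun m : Fin N => (m:ℕ) < l), ν m with hσl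
  have hjlT : jl ∈ Finset.univ.filter (fun k : Fin N => l ≤ (k:ℕ)) := by
    simp [hjl]
  have hilS : il ∈ Finset.univ.filter (fun m : Fin N => (m:ℕ) < l) := by
    simp [hil]; omega
  rcases eq_or_lt_of_le hγlb with hface1 | hγlow
  · -- gap equals δ₀ : contradiction via descent to the right
    exfalso
    have hub : ∀ k ∈ Finset.univ.filter (fun k : Fin N => l ≤ (k:ℕ)),
        ∀ m ∈ Finset.univ.filter (fun m : Fin N => (m:ℕ) < l),
        PhiCS β (xs k - xs m) ≤ Φinf := fun k hk m hm => phi_le_infty hβ (hstrad_pos k hk m hm)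
    have hinner : ∀ k ∈ Finset.univ.filter (fun k : Fin N => l ≤ (k:ℕ)),
        (∑ m ∈ Finset.univ.filter (fun m : Fin N => (m:ℕ) < l), PhiCS β (xs k - xs m))
          ≤ (N:ℝ)*Φinf := by
      intro k hk
      calc (∑ m ∈ Finset.univ.filter (fun m : Fin N => (m:ℕ) < l), PhiCS β (xs k - xs m))
          ≤ (Finset.univ.filter (fun m : Fin N => (m:ℕ) < l)).card • Φinf :=
            Finset.sum_le_card_nsmul _ _ _ (fun m hm => hub k hk m hm)
        _ = ((Finset.univ.filter (fun m : Fin N => (m:ℕ) < l)).card : ℝ) * Φinf :=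
            nsmul_eq_mul _ _
        _ ≤ (N:ℝ)*Φinf := by
            have hc : (Finset.univ.filter (fun m : Fin N => (m:ℕ) < l)).card ≤ N :=
              le_trans (Finset.card_le_univ _) (by simp)
            exact mul_le_mul_of_nonneg_right (by exact_mod_cast hc) hΦpos.le
    have hSSub : SS ≤ PhiCS β δ₀ + 2*(N:ℝ)^2*Φinf := by
      rw [hSS, ← Finset.add_sum_erase _ _ hjlT]
      have hb2 : ∑ k ∈ (Finset.univ.filter (fun k : Fin N => l ≤ (k:ℕ))).erase jl,
          (∑ m ∈ Finset.univ.filter (fun m : Fin N => (m:ℕ) < l), PhiCS β (xs k - xs m))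
            ≤ (N:ℝ)*((N:ℝ)*Φinf) := by
        calc _ ≤ ((Finset.univ.filter (fun k : Fin N => l ≤ (k:ℕ))).erase jl).card
              • ((N:ℝ)*Φinf) := Finset.sum_le_card_nsmul _ _ _
                (fun k hk => hinner k (Finset.mem_of_mem_erase hk))
          _ = (((Finset.univ.filter (fun k : Fin N => l ≤ (k:ℕ))).erase jl).card : ℝ)
              * ((N:ℝ)*Φinf) := nsmul_eq_mul _ _
          _ ≤ (N:ℝ)*((N:ℝ)*Φinf) := by
              have hc : ((Finset.univ.filter (fun k : Fin N => l ≤ (k:ℕ))).erase jl).card ≤ N :=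
                le_trans (Finset.card_le_univ _) (by simp)
              exact mul_le_mul_of_nonneg_right (by exact_mod_cast hc) (by positivity)
      have hb1 : (∑ m ∈ Finset.univ.filter (fun m : Fin N => (m:ℕ) < l),
          PhiCS β (xs jl - xs m)) ≤ PhiCS β δ₀ + (N:ℝ)*Φinf := by
        rw [← Finset.add_sum_erase _ _ hilS]
        have h1 : PhiCS β (xs jl - xs il) = PhiCS β δ₀ := by rw [← hface1]
        have h2 : ∑ m ∈ (Finset.univ.filter (fun m : Fin N => (m:ℕ) < l)).erase il,
            PhiCS β (xs jl - xs m) ≤ (N:ℝ)*Φinf := by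
          calc _ ≤ ((Finset.univ.filter (fun m : Fin N => (m:ℕ) < l)).erase il).card • Φinf :=
                Finset.sum_le_card_nsmul _ _ _
                  (fun m hm => hub jl hjlT m (Finset.mem_of_mem_erase hm))
            _ = (((Finset.univ.filter (fun m : Fin N => (m:ℕ) < l)).erase il).card : ℝ) * Φinf :=
                nsmul_eq_mul _ _
            _ ≤ (N:ℝ)*Φinf := by
                have hc : ((Finset.univ.filter (fun m : Fin N => (m:ℕ) < l)).erase il).card ≤ N :=
                  le_trans (Finset.card_le_univ _) (by simp)
                exact mul_le_mul_of_nonneg_right (by exact_mod_cast hc) hΦpos.le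
        linarith
      have hNsq : (N:ℝ) ≤ (N:ℝ)^2 := by
        have h := mul_le_mul_of_nonneg_left (by linarith only [hNR2] : (1:ℝ) ≤ (N:ℝ)) hNR.le
        rw [mul_one] at h
        calc (N:ℝ) ≤ (N:ℝ)*(N:ℝ) := h
          _ = (N:ℝ)^2 := by ring
      have hcomb : (N:ℝ)*Φinf + (N:ℝ)*((N:ℝ)*Φinf) ≤ 2*(N:ℝ)^2*Φinf := by
        calc (N:ℝ)*Φinf + (N:ℝ)*((N:ℝ)*Φinf) = ((N:ℝ) + (N:ℝ)^2)*Φinf := by ring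
          _ ≤ (2*(N:ℝ)^2)*Φinf := mul_le_mul_of_nonneg_right
              (by linarith only [hNsq]) hΦpos.le
          _ = 2*(N:ℝ)^2*Φinf := by ring
      linarith only [hb1, hb2, hcomb]
    have hDDneg : DDl < 0 := by
      rw [hform]
      have hσ := hσB l
      have hκN : (0:ℝ) < κ/(N:ℝ) := by positivity
      have h1 : (κ/(N:ℝ))*SS ≤ (κ/(N:ℝ))*(PhiCS β δ₀ + 2*(N:ℝ)^2*Φinf) :=
        mul_le_mul_of_nonneg_left hSSub hκN.le
      have h2 : (κ/(N:ℝ))*(PhiCS β δ₀ + 2*(N:ℝ)^2*Φinf)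
          < (κ/(N:ℝ))*(T₀ + 2*(N:ℝ)^2*Φinf) := by
        apply mul_lt_mul_of_pos_left _ hκN
        linarith
      have h3 : (κ/(N:ℝ))*(T₀ + 2*(N:ℝ)^2*Φinf) = -(B+1) := by
        rw [hT₀]
        field_simp
        ring
      have hσl' : σl ≤ B := hσ
      linarith only [h1, h2, h3, hσl']
    have hslope := (hasDerivWithinAt_iff_tendsto_slope).mp (hd.hasDerivWithinAt (s := Set.Ioi 0))
    have hIoi : (Set.Ioi (0:ℝ)) \ {0} = Set.Ioi 0 := Set.diff_singleton_eq_self (by simp)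
    rw [hIoi] at hslope
    have hev1 : ∀ᶠ s in 𝓝[>] (0:ℝ), slope (fun s => EE N β κ ν (ys s)) 0 s < 0 :=
      hslope.eventually_lt_const hDDneg
    have hev2 : Set.Ioc (0:ℝ) (R - δ₀) ∈ 𝓝[>] (0:ℝ) :=
      Ioc_mem_nhdsGT_of_mem ⟨le_refl 0, by linarith⟩
    obtain ⟨s, hsslope, hsIoc⟩ := (hev1.and (Filter.eventually_mem_set.mpr hev2)).exists
    have hspos : 0 < s := hsIoc.1
    have hslope_eq : slope (fun s => EE N β κ ν (ys s)) 0 s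
        = (EE N β κ ν (ys s) - EE N β κ ν xs) / s := by
      rw [slope_def_field, hys0, sub_zero]
    have hEneg : EE N β κ ν (ys s) < EE N β κ ν xs := by
      rw [hslope_eq] at hsslope
      rcases div_neg_iff.mp hsslope with ⟨h1, h2⟩ | ⟨h1, h2⟩
      · linarith
      · linarith
    have hmem' : ys s ∈ K := hmem s (by rw [← hface1]; linarith only [hspos])
      (by rw [← hface1]; linarith only [hsIoc.2])
    have hcontra := (isMinOn_iff.mp hxsmin) (ys s) hmem'
    linarith only [hcontra, hEneg]
  rcases eq_or_lt_of_le hγub with hface2 | hγhigh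
  · -- gap equals R : contradiction via descent to the left
    exfalso
    have hRlb : ∀ k ∈ Finset.univ.filter (fun k : Fin N => l ≤ (k:ℕ)),
        ∀ m ∈ Finset.univ.filter (fun m : Fin N => (m:ℕ) < l),
        Φinf - ε ≤ PhiCS β (xs k - xs m) := by
      intro k hk m hm
      rw [Finset.mem_filter] at hk hm
      have h1 : xs jl ≤ xs k := hxsmono.monotone (by rw [Fin.le_def]; simp [hjl]; omega)
      have h2 : xs m ≤ xs il := hxsmono.monotone (by rw [Fin.le_def]; simp [hil]; omega)
      have h3 : R ≤ xs k - xs m := by rw [← hface2]; linarith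
      exact hRΦ _ h3
    have hSSlb : ((N:ℝ)-(l:ℝ))*(l:ℝ)*(Φinf - ε) ≤ SS := by
      have hinner : ∀ k ∈ Finset.univ.filter (fun k : Fin N => l ≤ (k:ℕ)),
          ((Finset.univ.filter (fun m : Fin N => (m:ℕ) < l)).card) • (Φinf - ε)
            ≤ ∑ m ∈ Finset.univ.filter (fun m : Fin N => (m:ℕ) < l), PhiCS β (xs k - xs m) :=
        fun k hk => Finset.card_nsmul_le_sum _ _ _ (fun m hm => hRlb k hk m hm)
      have houter := Finset.card_nsmul_le_sum
        (Finset.univ.filter (fun k : Fin N => l ≤ (k:ℕ)))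
        (fun k => ∑ m ∈ Finset.univ.filter (fun m : Fin N => (m:ℕ) < l), PhiCS β (xs k - xs m))
        (((Finset.univ.filter (fun m : Fin N => (m:ℕ) < l)).card) • (Φinf - ε)) hinner
      rw [card_T, card_S N l (by omega)] at houter
      have hcast : ((N - l : ℕ) : ℝ) = (N:ℝ) - (l:ℝ) := by
        rw [Nat.cast_sub (by omega : l ≤ N)]
      calc ((N:ℝ)-(l:ℝ))*(l:ℝ)*(Φinf - ε)
          = (N - l : ℕ) • ((l : ℕ) • (Φinf - ε)) := by
            rw [nsmul_eq_mul, nsmul_eq_mul, hcast]; ring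
        _ ≤ SS := houter
    have hDDpos : 0 < DDl := by
      rw [hform]
      have h1 : (κ/(N:ℝ))*(((N:ℝ)-(l:ℝ))*(l:ℝ)*(Φinf - ε)) ≤ (κ/(N:ℝ))*SS :=
        mul_le_mul_of_nonneg_left hSSlb (by positivity)
      have h2 : η ≤ F l := hηle l hl1 hlN
      have h3 : (κ/(N:ℝ))*((l:ℝ)*((N:ℝ)-(l:ℝ)))*ε ≤ η/2 := by
        have hlN' : (l:ℝ) ≤ (N:ℝ) := by exact_mod_cast (by omega : l ≤ N)
        have hl0 : (0:ℝ) ≤ (l:ℝ) := by positivity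
        have hprod : (l:ℝ)*((N:ℝ)-(l:ℝ)) ≤ (N:ℝ)*(N:ℝ) :=
          mul_le_mul hlN' (by linarith only [hl0]) (by linarith only [hlN']) hNR.le
        calc (κ/(N:ℝ))*((l:ℝ)*((N:ℝ)-(l:ℝ)))*ε ≤ (κ/(N:ℝ))*((N:ℝ)*(N:ℝ))*ε := by
              apply mul_le_mul_of_nonneg_right
                (mul_le_mul_of_nonneg_left hprod (by positivity)) hεpos.le
          _ = η/2 := by rw [hε]; field_simp
      have hF2 : F l = σl + (κ/(N:ℝ))*((l:ℝ)*((N:ℝ)-(l:ℝ)))*Φinf := rfl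
      rw [hF2] at h2
      have hexpand : (κ/(N:ℝ))*(((N:ℝ)-(l:ℝ))*(l:ℝ)*(Φinf - ε))
          = (κ/(N:ℝ))*((l:ℝ)*((N:ℝ)-(l:ℝ)))*Φinf - (κ/(N:ℝ))*((l:ℝ)*((N:ℝ)-(l:ℝ)))*ε := by
        ring
      linarith only [h1, h2, h3, hexpand, hηpos]
    have hslope := (hasDerivWithinAt_iff_tendsto_slope).mp (hd.hasDerivWithinAt (s := Set.Iio 0))
    have hIio : (Set.Iio (0:ℝ)) \ {0} = Set.Iio 0 := Set.diff_singleton_eq_self (by simp)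
    rw [hIio] at hslope
    have hev1 : ∀ᶠ s in 𝓝[<] (0:ℝ), 0 < slope (fun s => EE N β κ ν (ys s)) 0 s :=
      hslope.eventually_const_lt hDDpos
    have hev2 : Set.Ico (δ₀ - R) 0 ∈ 𝓝[<] (0:ℝ) :=
      Ico_mem_nhdsLT_of_mem ⟨by linarith, le_refl 0⟩
    obtain ⟨s, hsslope, hsIco⟩ := (hev1.and (Filter.eventually_mem_set.mpr hev2)).exists
    have hsneg : s < 0 := hsIco.2
    have hslope_eq : slope (fun s => EE N β κ ν (ys s)) 0 s
        = (EE N β κ ν (ys s) - EE N β κ ν xs) / s := by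
      rw [slope_def_field, hys0, sub_zero]
    have hEneg : EE N β κ ν (ys s) < EE N β κ ν xs := by
      rw [hslope_eq] at hsslope
      rcases div_pos_iff.mp hsslope with ⟨h1, h2⟩ | ⟨h1, h2⟩
      · linarith
      · linarith
    have hmem' : ys s ∈ K := hmem s (by rw [hface2]; linarith only [hsIco.1])
      (by rw [hface2]; linarith only [hsneg])
    have hcontra := (isMinOn_iff.mp hxsmin) (ys s) hmem'
    linarith only [hcontra, hEneg]
  · -- interior case : derivative vanishes
    have hρ : 0 < min ((xs jl - xs il) - δ₀) (R - (xs jl - xs il)) :=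
      lt_min (by linarith only [hγlow]) (by linarith only [hγhigh])
    have hloc : IsLocalMin (fun s => EE N β κ ν (ys s)) 0 := by
      filter_upwards [Metric.ball_mem_nhds (0:ℝ) hρ] with s hs
      rw [Metric.mem_ball, Real.dist_eq, sub_zero] at hs
      obtain ⟨hs1, hs2⟩ := abs_lt.mp hs
      have h1 : min ((xs jl - xs il) - δ₀) (R - (xs jl - xs il)) ≤ (xs jl - xs il) - δ₀ :=
        min_le_left _ _
      have h2 : min ((xs jl - xs il) - δ₀) (R - (xs jl - xs il)) ≤ R - (xs jl - xs il) :=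
        min_le_right _ _
      have hmem' : ys s ∈ K := hmem s (by linarith only [hs1, h1])
        (by linarith only [hs2, h2])
      have := (isMinOn_iff.mp hxsmin) (ys s) hmem'
      show EE N β κ ν (ys 0) ≤ EE N β κ ν (ys s)
      rw [hys0]
      exact this
    have hzero := hloc.hasDerivAt_eq_zero hd
    rw [hDDl] at hzero
    exact hzero

end MINI

section TRAJ
open CS12 CS12b CS12c CS12d Finset

lemma antitoneOn_Ici_of_deriv {f f' : ℝ → ℝ}
    (hf : ∀ t ≥ (0:ℝ), HasDerivWithinAt f (f' t) (Set.Ici 0) t)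
    (hle : ∀ t ≥ (0:ℝ), f' t ≤ 0) : AntitoneOn f (Set.Ici 0) := by
  apply antitoneOn_of_deriv_nonpos (convex_Ici 0)
  · exact fun t ht => (hf t ht).continuousWithinAt
  · rw [interior_Ici]
    intro t ht
    exact (((hf t (le_of_lt ht)).hasDerivAt (Ici_mem_nhds ht)).differentiableAt).differentiableWithinAt
  · rw [interior_Ici]
    intro t ht
    rw [((hf t (le_of_lt ht)).hasDerivAt (Ici_mem_nhds ht)).deriv]
    exact hle t (le_of_lt ht)

variable (N : ℕ) (β κ : ℝ) (ν : Fin N → ℝ)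

lemma erase_sum_phi (a : Fin N → ℝ) (i : Fin N) :
    ∑ k ∈ Finset.univ.erase i, PhiCS β (a k - a i) = ∑ k, PhiCS β (a k - a i) := by
  rw [← Finset.sum_erase_add _ _ (Finset.mem_univ i), sub_self, phi_zero, add_zero]

lemma hx_deriv_eq_gE (a : Fin N → ℝ) (i : Fin N) :
    ν i + (κ/(N:ℝ)) * ∑ k ∈ Finset.univ.erase i, PhiCS β (a k - a i)
      = -(gE N β κ ν a i) := by
  rw [erase_sum_phi]
  unfold gE
  ring

end TRAJ

section MAIN
open CS12 CS12b CS12c CS12d Finset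

set_option maxHeartbeats 1000000 in
theorem stmt12' (N : ℕ) (hN : 2 ≤ N) (β κ : ℝ) (hβ : 1 < β) (hκ : 0 < κ)
    (ν : Fin N → ℝ) (hν : ∑ i, ν i = 0)
    (x : ℝ → Fin N → ℝ) (hx : IsCFSol N β κ ν x)
    (hx0 : StrictMono (x 0)) (hcrit : kappaC N β ν < κ) :
    ∀ i j : Fin N, ∃ L : ℝ, Filter.Tendsto (fun t => |x t i - x t j|) Filter.atTop (nhds L) := by
  classical
  obtain ⟨hsep, hsum0, hderiv⟩ := hx
  have hNR : (0:ℝ) < (N:ℝ) := by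
    have : (2:ℝ) ≤ (N:ℝ) := by exact_mod_cast hN
    linarith
  have hb : (0:ℝ) < β - 1 := by linarith
  -- order preservation
  have hcont : ∀ i : Fin N, ContinuousOn (fun t => x t i) (Set.Ici 0) :=
    fun i t ht => (hderiv i t ht).continuousWithinAt
  have hordered : ∀ t ≥ (0:ℝ), StrictMono (x t) := by
    intro t ht a b hab
    by_contra hcon
    push_neg at hcon
    have hne : x t a ≠ x t b := hsep t ht a b (ne_of_lt hab)
    have hlt : x t b < x t a := lt_of_le_of_ne hcon (fun h => hne h.symm)
    have hcontd : ContinuousOn (fun s => x s a - x s b) (Set.Icc 0 t) :=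
      ((hcont a).mono Set.Icc_subset_Ici_self).sub ((hcont b).mono Set.Icc_subset_Ici_self)
    have h0 : x 0 a - x 0 b < 0 := sub_neg.mpr (hx0 hab)
    have hdt : 0 < x t a - x t b := sub_pos.mpr hlt
    have hmem : (0:ℝ) ∈ Set.Icc (x 0 a - x 0 b) (x t a - x t b) := ⟨h0.le, hdt.le⟩
    obtain ⟨c, hc, hc0⟩ := intermediate_value_Icc ht hcontd hmem
    exact hsep c hc.1 a b (ne_of_lt hab) (sub_eq_zero.mp hc0)
  -- conservation of the sum
  have hSd : ∀ t ≥ (0:ℝ), HasDerivWithinAt (fun s => ∑ i, x s i) 0 (Set.Ici 0) t := by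
    intro t ht
    have h : HasDerivWithinAt (fun s => ∑ i, x s i)
        (∑ i, -(gE N β κ ν (x t) i)) (Set.Ici 0) t := by
      apply HasDerivWithinAt.fun_sum
      intro i _
      have h2 := hderiv i t ht
      rwa [hx_deriv_eq_gE N β κ ν (x t) i] at h2
    rwa [Finset.sum_neg_distrib, sum_gE N β κ ν hν (x t), neg_zero] at h
  have hsumt : ∀ t ≥ (0:ℝ), ∑ i, x t i = 0 := by
    intro t ht
    have hc := constant_of_has_deriv_right_zero (f := fun s => ∑ i, x s i) (a := 0) (b := t)
      (fun s hs => ((hSd s hs.1).continuousWithinAt).mono Set.Icc_subset_Ici_self)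
      (fun s hs => (hSd s hs.1).mono (Set.Ici_subset_Ici.mpr hs.1))
      t ⟨ht, le_refl t⟩
    exact hc.trans hsum0
  -- supercritical condition in the form needed
  have hsup : ∀ l : ℕ, 1 ≤ l → l ≤ N - 1 →
      0 < (∑ m ∈ Finset.univ.filter (fun m : Fin N => (m:ℕ) < l), ν m)
        + (κ/(N:ℝ)) * ((l:ℝ)*((N:ℝ)-(l:ℝ))) * (1/(β-1)) := by
    intro l hl1 hlN
    have hN1 : 0 < N - 1 := by omega
    set l' : Fin (N-1) := ⟨l-1, by omega⟩ with hl'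
    have hl'val : (l':ℕ) = l - 1 := rfl
    have hvalR : ((l':ℕ):ℝ) + 1 = (l:ℝ) := by
      rw [hl'val, Nat.cast_sub hl1]
      push_cast
      ring
    have hbdd : BddAbove (Set.range (fun l'' : Fin (N-1) =>
        (-((N:ℝ) * (β - 1) * ∑ i : Fin N, if (i:ℕ) < (l'':ℕ) + 1 then ν i else 0)) /
          ((((l'':ℕ):ℝ) + 1) * ((N:ℝ) - (((l'':ℕ):ℝ) + 1))))) :=
      (Set.finite_range _).bddAbove
    have hle := le_ciSup hbdd l'
    unfold kappaC at hcrit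
    have hlt := lt_of_le_of_lt hle hcrit
    have hσeq : (∑ i : Fin N, if (i:ℕ) < (l':ℕ) + 1 then ν i else 0)
        = ∑ m ∈ Finset.univ.filter (fun m : Fin N => (m:ℕ) < l), ν m := by
      rw [Finset.sum_filter]
      apply Finset.sum_congr rfl
      intro m _
      have hiff : ((m:ℕ) < (l':ℕ) + 1) ↔ ((m:ℕ) < l) := by rw [hl'val]; omega
      by_cases h : (m:ℕ) < l
      · rw [if_pos (hiff.mpr h), if_pos h]
      · rw [if_neg (fun hh => h (hiff.mp hh)), if_neg h]
    rw [hσeq, hvalR] at hlt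
    have hD : (0:ℝ) < ((l:ℝ))*((N:ℝ)-(l:ℝ)) := by
      have h1 : (1:ℝ) ≤ (l:ℝ) := by exact_mod_cast hl1
      have h2 : (l:ℝ) ≤ (N:ℝ) - 1 := by
        have h3 : ((l:ℕ):ℝ) ≤ ((N-1:ℕ):ℝ) := by exact_mod_cast hlN
        rw [Nat.cast_sub (by omega)] at h3
        push_cast at h3
        linarith
      nlinarith
    have hmul := (div_lt_iff₀ hD).mp hlt
    have hkey : (∑ m ∈ Finset.univ.filter (fun m : Fin N => (m:ℕ) < l), ν m)
        + (κ/(N:ℝ))*((l:ℝ)*((N:ℝ)-(l:ℝ)))*(1/(β-1))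
        = ((N:ℝ)*(β-1)*(∑ m ∈ Finset.univ.filter (fun m : Fin N => (m:ℕ) < l), ν m)
            + κ*((l:ℝ)*((N:ℝ)-(l:ℝ))))/((N:ℝ)*(β-1)) := by
      field_simp
    rw [hkey]
    exact div_pos (by linarith) (mul_pos hNR hb)
  -- the stationary configuration
  obtain ⟨xs, hxsmono, hxssum, hxscrit⟩ := exists_critical N β κ ν hN hβ hκ hν hsup
  -- trajectory derivatives
  have hxd : ∀ (i : Fin N), ∀ t ≥ (0:ℝ),
      HasDerivWithinAt (fun s => x s i) (-(gE N β κ ν (x t) i)) (Set.Ici 0) t := by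
    intro i t ht
    have h := hderiv i t ht
    rwa [hx_deriv_eq_gE N β κ ν (x t) i] at h
  set G : ℝ → ℝ := fun t => ∑ i, (x t i - xs i)^2 with hG
  have hG0 : ∀ t, 0 ≤ G t := fun t => Finset.sum_nonneg fun i _ => sq_nonneg _
  set Estar : ℝ := EE N β κ ν xs with hEstar
  set FE : ℝ → ℝ := fun t => EE N β κ ν (x t) with hFE
  have hGd : ∀ t ≥ (0:ℝ), HasDerivWithinAt G
      (∑ i, 2*(x t i - xs i)*(-(gE N β κ ν (x t) i))) (Set.Ici 0) t := by
    intro t ht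
    apply HasDerivWithinAt.fun_sum
    intro i _
    have h1 : HasDerivWithinAt (fun s => x s i - xs i) (-(gE N β κ ν (x t) i))
        (Set.Ici 0) t := (hxd i t ht).sub_const (xs i)
    have h2 := h1.pow 2
    refine h2.congr_deriv ?_
    push_cast
    ring
  have hFd : ∀ t ≥ (0:ℝ), HasDerivWithinAt FE
      (∑ i, (-(gE N β κ ν (x t) i)) * gE N β κ ν (x t) i) (Set.Ici 0) t := by
    intro t ht
    exact hasDerivWithinAt_EE N β κ ν hβ hNR.ne' (fun i => hxd i t ht) (hsep t ht)
  have habs_le_sum : ∀ (a : Fin N → ℝ) (i : Fin N), |a i| ≤ ∑ k, |a k| := fun a i =>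
    Finset.single_le_sum (fun k _ => abs_nonneg (a k)) (Finset.mem_univ i)
  -- lower bound on the energy along the trajectory (pure convexity, pointwise M)
  have hElb : ∀ t ≥ (0:ℝ), Estar ≤ FE t := by
    intro t ht
    set M : ℝ := (∑ k, |xs k|) + (∑ k, |x t k|) + 1 with hMt
    have hsxs : (0:ℝ) ≤ ∑ k, |xs k| := Finset.sum_nonneg fun k _ => abs_nonneg _
    have hsxt : (0:ℝ) ≤ ∑ k, |x t k| := Finset.sum_nonneg fun k _ => abs_nonneg _
    have hMpos : 0 < M := by positivity
    have h := key_ineq N β κ ν hβ hκ hNR hMpos hxsmono (hordered t ht)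
      (fun i => by have := habs_le_sum xs i; linarith)
      (fun i => by have := habs_le_sum (x t) i; linarith)
    have hmid : (∑ i, (x t i - xs i) * gE N β κ ν xs i) = 0 := by
      simp [hxscrit]
    have hrem : 0 ≤ (κ/(2*(N:ℝ))) * (2*M)^(-β) * (1/2)
        * (∑ i, ∑ k, ((x t k - xs k) - (x t i - xs i))^2) := by
      apply mul_nonneg
      · apply mul_nonneg (mul_nonneg (by positivity) (Real.rpow_nonneg (by linarith) _))
        norm_num
      · exact Finset.sum_nonneg fun i _ => Finset.sum_nonneg fun k _ => sq_nonneg _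
    rw [hmid] at h
    linarith
  -- derivative bound for G
  have hGd_le : ∀ t ≥ (0:ℝ),
      (∑ i, 2*(x t i - xs i)*(-(gE N β κ ν (x t) i))) ≤ -2*(FE t - Estar) := by
    intro t ht
    set M : ℝ := (∑ k, |xs k|) + (∑ k, |x t k|) + 1 with hMt
    have hsxs : (0:ℝ) ≤ ∑ k, |xs k| := Finset.sum_nonneg fun k _ => abs_nonneg _
    have hsxt : (0:ℝ) ≤ ∑ k, |x t k| := Finset.sum_nonneg fun k _ => abs_nonneg _
    have hMpos : 0 < M := by positivity
    have h := key_ineq N β κ ν hβ hκ hNR hMpos (hordered t ht) hxsmono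
      (fun i => by have := habs_le_sum (x t) i; linarith)
      (fun i => by have := habs_le_sum xs i; linarith)
    have hrem : 0 ≤ (κ/(2*(N:ℝ))) * (2*M)^(-β) * (1/2)
        * (∑ i, ∑ k, ((xs k - x t k) - (xs i - x t i))^2) := by
      apply mul_nonneg
      · apply mul_nonneg (mul_nonneg (by positivity) (Real.rpow_nonneg (by linarith) _))
        norm_num
      · exact Finset.sum_nonneg fun i _ => Finset.sum_nonneg fun k _ => sq_nonneg _
    have hEq1 : (∑ i, 2*(x t i - xs i)*(-(gE N β κ ν (x t) i)))
        = 2 * ∑ i, (xs i - x t i) * gE N β κ ν (x t) i := by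
      rw [Finset.mul_sum]
      exact Finset.sum_congr rfl fun i _ => by ring
    rw [hEq1]
    linarith
  have hGanti : AntitoneOn G (Set.Ici 0) :=
    antitoneOn_Ici_of_deriv hGd (fun t ht => by
      have h1 := hGd_le t ht
      have h2 := hElb t ht
      linarith)
  have hFanti : AntitoneOn FE (Set.Ici 0) :=
    antitoneOn_Ici_of_deriv hFd (fun t ht => by
      have : (∑ i, (-(gE N β κ ν (x t) i)) * gE N β κ ν (x t) i)
          = -∑ i, (gE N β κ ν (x t) i)^2 := by
        rw [← Finset.sum_neg_distrib]
        exact Finset.sum_congr rfl fun i _ => by ring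
      rw [this, neg_nonpos]
      exact Finset.sum_nonneg fun i _ => sq_nonneg _)
  -- uniform bound
  have hGbound : ∀ t ≥ (0:ℝ), G t ≤ G 0 := fun t ht =>
    hGanti Set.self_mem_Ici ht ht
  have hsq : ∀ t ≥ (0:ℝ), ∀ i, |x t i - xs i| ≤ Real.sqrt (G 0) := by
    intro t ht i
    have h1 : (x t i - xs i)^2 ≤ ∑ k, (x t k - xs k)^2 :=
      Finset.single_le_sum (f := fun k => (x t k - xs k)^2)
        (fun k _ => sq_nonneg _) (Finset.mem_univ i)
    have h1' : (x t i - xs i)^2 ≤ G t := h1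
    have h2 := Real.sqrt_le_sqrt (le_trans h1' (hGbound t ht))
    rwa [Real.sqrt_sq_eq_abs] at h2
  set M : ℝ := Real.sqrt (G 0) + (∑ k, |xs k|) + 1 with hMdef
  have hsqrtnn : (0:ℝ) ≤ Real.sqrt (G 0) := Real.sqrt_nonneg _
  have hsxs : (0:ℝ) ≤ ∑ k, |xs k| := Finset.sum_nonneg fun k _ => abs_nonneg _
  have hMpos : 0 < M := by positivity
  have haM : ∀ i, |xs i| ≤ M := fun i => by
    have := habs_le_sum xs i
    rw [hMdef]
    linarith
  have hbM : ∀ t ≥ (0:ℝ), ∀ i, |x t i| ≤ M := by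
    intro t ht i
    have h1 := hsq t ht i
    have h2 := habs_le_sum xs i
    have h3 : x t i = xs i + (x t i - xs i) := by ring
    calc |x t i| = |xs i + (x t i - xs i)| := by rw [← h3]
      _ ≤ |xs i| + |x t i - xs i| := abs_add_le _ _
      _ ≤ M := by rw [hMdef]; linarith
  -- strong convexity near the stationary point
  set c2 : ℝ := (κ/2) * (2*M)^(-β) with hc2
  have hrpow : (0:ℝ) < (2*M)^(-β) := Real.rpow_pos_of_pos (by linarith) _
  have hc2pos : 0 < c2 := by positivity
  have hstrong : ∀ t ≥ (0:ℝ), Estar + c2 * G t ≤ FE t := by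
    intro t ht
    have h := key_ineq N β κ ν hβ hκ hNR hMpos hxsmono (hordered t ht) haM (hbM t ht)
    have hmid : (∑ i, (x t i - xs i) * gE N β κ ν xs i) = 0 := by
      simp [hxscrit]
    have hQ0 := Qid N (fun i => x t i - xs i)
      (by rw [Finset.sum_sub_distrib, hsumt t ht, hxssum, sub_zero])
    have hQ : (∑ i, ∑ k, ((x t k - xs k) - (x t i - xs i))^2) = 2*(N:ℝ)*G t := hQ0
    rw [hmid, hQ] at h
    have hco : (κ/(2*(N:ℝ)))*(2*M)^(-β)*(1/2)*(2*(N:ℝ)*G t) = c2 * G t := by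
      rw [hc2]
      field_simp
    linarith
  -- energy converges to Estar
  have hex : ∀ ε > (0:ℝ), ∃ t₀ : ℝ, 0 ≤ t₀ ∧ FE t₀ < Estar + ε := by
    intro ε hε
    by_contra hcon
    push_neg at hcon
    set H : ℝ → ℝ := fun t => G t + 2*ε*t with hH
    have hHd : ∀ t ≥ (0:ℝ), HasDerivWithinAt H
        ((∑ i, 2*(x t i - xs i)*(-(gE N β κ ν (x t) i))) + 2*ε) (Set.Ici 0) t := by
      intro t ht
      apply (hGd t ht).add
      have h2 : HasDerivWithinAt (fun s : ℝ => 2*ε*s) (2*ε) (Set.Ici 0) t := by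
        simpa using (hasDerivWithinAt_id t (Set.Ici 0)).const_mul (2*ε)
      exact h2
    have hHanti : AntitoneOn H (Set.Ici 0) :=
      antitoneOn_Ici_of_deriv hHd (fun t ht => by
        have h1 := hGd_le t ht
        have h2 := hcon t ht
        linarith)
    set T : ℝ := (G 0)/(2*ε) + 1 with hT
    have hTpos : 0 < T := by positivity
    have hHT := hHanti Set.self_mem_Ici (Set.mem_Ici.mpr hTpos.le) hTpos.le
    have h0 : H 0 = G 0 := by rw [hH]; norm_num
    have hq : 2*ε*T = G 0 + 2*ε := by
      rw [hT]
      field_simp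
    have hHTval : H T = G T + 2*ε*T := rfl
    have := hG0 T
    rw [h0, hHTval, hq] at hHT
    linarith
  have hFto : Filter.Tendsto FE Filter.atTop (nhds Estar) := by
    rw [Metric.tendsto_atTop]
    intro ε hε
    obtain ⟨t₀, ht₀, hFt₀⟩ := hex ε hε
    refine ⟨t₀, fun t ht => ?_⟩
    have ht0 : (0:ℝ) ≤ t := le_trans ht₀ ht
    have h1 := hElb t ht0
    have h2 : FE t ≤ FE t₀ := hFanti (Set.mem_Ici.mpr ht₀) (Set.mem_Ici.mpr ht0) ht
    rw [Real.dist_eq, abs_of_nonneg (by linarith)]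
    linarith
  have hGto : Filter.Tendsto G Filter.atTop (nhds 0) := by
    have hup : ∀ᶠ t in Filter.atTop, G t ≤ (FE t - Estar)/c2 := by
      filter_upwards [Filter.eventually_ge_atTop (0:ℝ)] with t ht
      have h := hstrong t ht
      rw [le_div_iff₀ hc2pos]
      linarith [mul_comm (G t) c2]
    have hgt : Filter.Tendsto (fun t => (FE t - Estar)/c2) Filter.atTop (nhds 0) := by
      have h := (hFto.sub_const Estar).div_const c2
      simpa using h
    exact squeeze_zero' (Filter.Eventually.of_forall hG0) hup hgt
  have hxc : ∀ k : Fin N, Filter.Tendsto (fun t => x t k - xs k) Filter.atTop (nhds 0) := by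
    intro k
    have hsqrt : Filter.Tendsto (fun t => Real.sqrt (G t)) Filter.atTop (nhds 0) := by
      have h := (Real.continuous_sqrt.continuousAt (x := (0:ℝ))).tendsto.comp hGto
      simpa [Function.comp_def] using h
    have hup : ∀ᶠ t in Filter.atTop, ‖x t k - xs k‖ ≤ Real.sqrt (G t) := by
      filter_upwards [Filter.eventually_ge_atTop (0:ℝ)] with t ht
      have h1 : (x t k - xs k)^2 ≤ ∑ k', (x t k' - xs k')^2 :=
        Finset.single_le_sum (f := fun k' => (x t k' - xs k')^2)
          (fun k' _ => sq_nonneg _) (Finset.mem_univ k)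
      have h1' : (x t k - xs k)^2 ≤ G t := h1
      have h2 := Real.sqrt_le_sqrt h1'
      rw [Real.sqrt_sq_eq_abs] at h2
      rw [Real.norm_eq_abs]
      exact h2
    exact squeeze_zero_norm' hup hsqrt
  intro i j
  refine ⟨|xs i - xs j|, ?_⟩
  have hdiff : Filter.Tendsto (fun t => x t i - x t j) Filter.atTop (nhds (xs i - xs j)) := by
    have h := ((hxc i).sub (hxc j)).add_const (xs i - xs j)
    have heq : (fun t => ((x t i - xs i) - (x t j - xs j)) + (xs i - xs j))
        = fun t => x t i - x t j := by funext t; ring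
    rw [heq] at h
    simpa using h
  exact hdiff.abs
end MAIN

/-- Supercritical coupling implies mono-cluster flocking. -/
theorem stmt12 (N : ℕ) (hN : 2 ≤ N) (β κ : ℝ) (hβ : 1 < β) (hκ : 0 < κ)
    (ν : Fin N → ℝ) (hν : ∑ i, ν i = 0)
    (x : ℝ → Fin N → ℝ) (hx : IsCFSol N β κ ν x)
    (hx0 : StrictMono (x 0)) (hcrit : kappaC N β ν < κ) :
    ∀ i j : Fin N, ∃ L : ℝ, Tendsto (fun t => |x t i - x t j|) atTop (𝓝 L) :=
  stmt12' N hN β κ hβ hκ ν hν x hx hx0 hcrit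
end

section
/- Let x be a collision-free solution of the first-order singular Cucker–Smale system with β > 1 whose initial positions are strictly increasing: x_1(0) < x_2(0) < … < x_N(0), and define the critical coupling strength κ_c = max_{1 ≤ l ≤ N−1} ( −N(β−1)·Σ_{i=1}^l ν_i ) / ( l(N−l) ). If x exhibits mono-cluster flocking, i.e., for every pair of indices i, j the limit lim_{t→∞} |x_i(t) − x_j(t)| exists and is finite, then κ > κ_c. -/
open Real Filter Set Topology

lemma phiCS_zero (β : ℝ) : PhiCS β 0 = 0 := by simp [PhiCS, Real.sign_zero]

lemma phiCS_neg (β y : ℝ) : PhiCS β (-y) = - PhiCS β y := by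
  simp [PhiCS, Real.sign_neg, abs_neg, neg_div, neg_mul]

lemma phiCS_pos_eq (β : ℝ) {y : ℝ} (hy : 0 < y) :
    PhiCS β y = (1 - y ^ (1 - β)) / (β - 1) := by
  rw [PhiCS, Real.sign_of_pos hy, abs_of_pos hy, one_mul]

lemma phiCS_lt (hβ : 1 < β) {y : ℝ} (hy : 0 < y) : PhiCS β y < 1 / (β - 1) := by
  rw [phiCS_pos_eq β hy]
  have h1 : (0:ℝ) < y ^ (1 - β) := Real.rpow_pos_of_pos hy _
  exact div_lt_div_of_pos_right (by linarith) (by linarith)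

lemma phiCS_mono (hβ : 1 < β) {y z : ℝ} (hy : 0 < y) (hyz : y ≤ z) :
    PhiCS β y ≤ PhiCS β z := by
  have hz : 0 < z := lt_of_lt_of_le hy hyz
  rw [phiCS_pos_eq β hy, phiCS_pos_eq β hz]
  have : z ^ (1 - β) ≤ y ^ (1 - β) :=
    Real.rpow_le_rpow_of_nonpos hy hyz (by linarith)
  exact div_le_div_of_nonneg_right (by linarith) (by linarith)

lemma sum_antisymm {ι : Type*} (s : Finset ι) (g : ι → ι → ℝ)
    (hg : ∀ i j, g i j = - g j i) : ∑ i ∈ s, ∑ j ∈ s, g i j = 0 := by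
  have h : ∑ i ∈ s, ∑ j ∈ s, g i j = - ∑ i ∈ s, ∑ j ∈ s, g i j := by
    conv_lhs => rw [Finset.sum_comm]
    calc ∑ j ∈ s, ∑ i ∈ s, g i j = ∑ j ∈ s, ∑ i ∈ s, -(g j i) :=
          Finset.sum_congr rfl fun j _ => Finset.sum_congr rfl fun i _ => hg i j
      _ = - ∑ j ∈ s, ∑ i ∈ s, g j i := by simp [Finset.sum_neg_distrib]
  linarith

/-- Rewriting the drift of a partial sum. -/
lemma deriv_value_rewrite {N : ℕ} (β c : ℝ) (ν : Fin N → ℝ) (v : Fin N → ℝ)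
    (A : Finset (Fin N)) :
    ∑ i ∈ A, (ν i + c * ∑ k ∈ Finset.univ.erase i, PhiCS β (v k - v i))
    = ∑ i ∈ A, ν i + c * ∑ i ∈ A, ∑ k ∈ Aᶜ, PhiCS β (v k - v i) := by
  rw [Finset.sum_add_distrib, ← Finset.mul_sum]
  congr 2
  have h1 : ∀ i ∈ A, ∑ k ∈ Finset.univ.erase i, PhiCS β (v k - v i)
      = ∑ k ∈ A, PhiCS β (v k - v i) + ∑ k ∈ Aᶜ, PhiCS β (v k - v i) := by
    intro i _
    rw [Finset.sum_add_sum_compl]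
    exact Finset.sum_erase _ (by simp [phiCS_zero])
  rw [Finset.sum_congr rfl h1, Finset.sum_add_distrib,
    sum_antisymm A (fun i k => PhiCS β (v k - v i))
      (fun i k => by rw [← phiCS_neg]; ring_nf), zero_add]

lemma card_filter_lt (N m : ℕ) (hm : m ≤ N) :
    (Finset.univ.filter fun i : Fin N => (i:ℕ) < m).card = m := by
  have : (Finset.univ.filter fun i : Fin N => (i:ℕ) < m) =
      Finset.map ⟨Fin.castLE hm, Fin.castLE_injective hm⟩ Finset.univ := by
    ext i
    simp only [Finset.mem_filter, Finset.mem_univ, true_and, Finset.mem_map,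
      Function.Embedding.coeFn_mk]
    constructor
    · intro h; exact ⟨⟨i, h⟩, rfl⟩
    · rintro ⟨j, rfl⟩; exact j.2
  rw [this, Finset.card_map, Finset.card_univ, Fintype.card_fin]

/-- Mono-cluster flocking implies supercritical coupling. -/
theorem stmt13 (N : ℕ) (hN : 2 ≤ N) (β κ : ℝ) (hβ : 1 < β) (hκ : 0 < κ)
    (ν : Fin N → ℝ) (hν : ∑ i, ν i = 0)
    (x : ℝ → Fin N → ℝ) (hx : IsCFSol N β κ ν x)
    (hx0 : StrictMono (x 0))
    (hflock : ∀ i j : Fin N, ∃ L : ℝ, Tendsto (fun t => |x t i - x t j|) atTop (𝓝 L)) :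
    kappaC N β ν < κ := by
  obtain ⟨hcol, hsum0, hode⟩ := hx
  have hN0 : (0:ℝ) < N := by positivity
  have hβ1 : (0:ℝ) < β - 1 := by linarith
  have hcont : ∀ i, ContinuousOn (fun t => x t i) (Ici 0) :=
    fun i t ht => (hode i t ht).continuousWithinAt
  -- order preservation
  have horder : ∀ i j : Fin N, i < j → ∀ t, 0 ≤ t → x t i < x t j := by
    intro i j hij t ht
    by_contra hcon
    push_neg at hcon
    have hlt : x t j < x t i :=
      lt_of_le_of_ne hcon (hcol t ht j i (ne_of_gt hij))
    set f : ℝ → ℝ := fun s => x s j - x s i with hf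
    have hfc : ContinuousOn f (Icc 0 t) :=
      (((hcont j).sub (hcont i))).mono Icc_subset_Ici_self
    have h0 : 0 < f 0 := sub_pos.2 (hx0 hij)
    have hmem : (0:ℝ) ∈ Icc (f t) (f 0) := ⟨by simp [hf]; linarith, le_of_lt h0⟩
    obtain ⟨s, hs, hfs⟩ := intermediate_value_Icc' ht hfc hmem
    exact hcol s hs.1 j i (ne_of_gt hij) (sub_eq_zero.mp hfs)
  -- pairwise limits
  have hdiff : ∀ i j : Fin N, ∃ L, Tendsto (fun t => x t i - x t j) atTop (𝓝 L) := by
    intro i j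
    rcases lt_trichotomy i j with h | h | h
    · obtain ⟨L, hL⟩ := hflock i j
      refine ⟨-L, (hL.neg).congr' ?_⟩
      filter_upwards [eventually_ge_atTop (0:ℝ)] with t ht
      have := horder i j h t ht
      rw [abs_of_nonpos (by linarith)]; ring
    · subst h; exact ⟨0, by simpa using (tendsto_const_nhds : Tendsto (fun _ : ℝ => (0:ℝ)) atTop _)⟩
    · obtain ⟨L, hL⟩ := hflock i j
      refine ⟨L, hL.congr' ?_⟩
      filter_upwards [eventually_ge_atTop (0:ℝ)] with t ht
      rw [abs_of_nonneg (by linarith [horder j i h t ht])]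
  choose L hL using hdiff
  -- total sum is constantly zero
  have htot : ∀ t, 0 ≤ t → ∑ i, x t i = 0 := by
    intro t ht
    have hder : ∀ s ∈ Ico 0 t, HasDerivWithinAt (fun u => ∑ i, x u i) 0 (Ici s) s := by
      intro s hs
      have h1 : HasDerivWithinAt (fun u => ∑ i, x u i)
          (∑ i, (ν i + (κ / (N:ℝ)) * ∑ k ∈ Finset.univ.erase i, PhiCS β (x s k - x s i)))
          (Ici 0) s := HasDerivWithinAt.fun_sum fun i _ => hode i s hs.1
      have h2 : (∑ i, (ν i + (κ / (N:ℝ)) * ∑ k ∈ Finset.univ.erase i, PhiCS β (x s k - x s i))) = 0 := by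
        rw [deriv_value_rewrite]
        simp [hν]
      rw [h2] at h1
      exact h1.mono (Ici_subset_Ici.2 hs.1)
    have hc : ContinuousOn (fun u => ∑ i, x u i) (Icc 0 t) :=
      (continuousOn_finset_sum _ fun i _ => hcont i).mono Icc_subset_Ici_self
    have := constant_of_has_deriv_right_zero hc hder t (right_mem_Icc.2 ht)
    rw [this, hsum0]

  -- the key claim for each cut 1 ≤ m ≤ N-1
  have key : ∀ l : Fin (N - 1),
      (-((N:ℝ) * (β - 1) * ∑ i : Fin N, if (i:ℕ) < (l:ℕ) + 1 then ν i else 0)) /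
        ((((l:ℕ):ℝ) + 1) * ((N:ℝ) - (((l:ℕ):ℝ) + 1))) < κ := by
    intro l
    set m : ℕ := (l:ℕ) + 1 with hm
    have hmN : m ≤ N - 1 := by omega
    have hmN' : m ≤ N := by omega
    have hlN : (l : ℕ) < N - 1 := l.2
    set A : Finset (Fin N) := Finset.univ.filter (fun i : Fin N => (i:ℕ) < m) with hA
    have hmemA : ∀ i : Fin N, i ∈ A ↔ (i:ℕ) < m := by intro i; simp [hA]
    have hmemAc : ∀ k : Fin N, k ∈ Aᶜ ↔ ¬ (k:ℕ) < m := by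
      intro k; simp [hA, Finset.mem_compl]
    have hANe : A.Nonempty := ⟨⟨0, by omega⟩, (hmemA _).2 (by simp [hm])⟩
    have hAcNe : Aᶜ.Nonempty := ⟨⟨N - 1, by omega⟩, (hmemAc _).2 (by simp; omega)⟩
    have hcardA : A.card = m := card_filter_lt N m hmN'
    have hcardAc : Aᶜ.card = N - m := by
      rw [Finset.card_compl, hcardA, Fintype.card_fin]
    have hik : ∀ i ∈ A, ∀ k ∈ Aᶜ, i < k := by
      intro i hi k hk
      rw [hmemA] at hi; rw [hmemAc] at hk
      exact Fin.lt_def.2 (by omega)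
    -- the partial sum and its derivative
    set S : ℝ → ℝ := fun t => ∑ i ∈ A, x t i with hS
    set ψ : ℝ → ℝ := fun t =>
      ∑ i ∈ A, ν i + (κ / (N:ℝ)) * ∑ i ∈ A, ∑ k ∈ Aᶜ, PhiCS β (x t k - x t i) with hψ
    have hSder : ∀ t, 0 ≤ t → HasDerivWithinAt S (ψ t) (Ici 0) t := by
      intro t ht
      have h1 : HasDerivWithinAt S
          (∑ i ∈ A, (ν i + (κ / (N:ℝ)) * ∑ k ∈ Finset.univ.erase i, PhiCS β (x t k - x t i)))
          (Ici 0) t := HasDerivWithinAt.fun_sum fun i _ => hode i t ht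
      rwa [deriv_value_rewrite] at h1
    -- S converges
    have hSlim : ∃ LS, Tendsto S atTop (𝓝 LS) := by
      refine ⟨(∑ i ∈ A, ∑ j : Fin N, L i j) / N, ?_⟩
      have h2 : Tendsto (fun t => (∑ i ∈ A, ∑ j : Fin N, (x t i - x t j)) / N) atTop
          (𝓝 ((∑ i ∈ A, ∑ j : Fin N, L i j) / N)) := by
        apply Tendsto.div_const
        apply tendsto_finset_sum
        intro i _
        exact tendsto_finset_sum _ fun j _ => hL i j
      refine h2.congr' ?_
      filter_upwards [eventually_ge_atTop (0:ℝ)] with t ht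
      have : ∑ i ∈ A, ∑ j : Fin N, (x t i - x t j) = (N:ℝ) * S t := by
        have : ∀ i ∈ A, ∑ j : Fin N, (x t i - x t j) = (N:ℝ) * x t i := by
          intro i _
          rw [Finset.sum_sub_distrib, htot t ht, Finset.sum_const, Finset.card_univ,
            Fintype.card_fin, nsmul_eq_mul, sub_zero]
        rw [Finset.sum_congr rfl this, ← Finset.mul_sum]
      rw [this]
      field_simp
    obtain ⟨LS, hLS⟩ := hSlim
    -- eventual bound on the drift
    set c₀ : ℝ := ∑ i ∈ A, ν i + (κ / (N:ℝ)) * ∑ i ∈ A, ∑ k ∈ Aᶜ, PhiCS β (L k i + 1) with hc₀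
    have hLpos : ∀ i ∈ A, ∀ k ∈ Aᶜ, 0 ≤ L k i := by
      intro i hi k hk
      refine ge_of_tendsto (hL k i) ?_
      filter_upwards [eventually_ge_atTop (0:ℝ)] with t ht
      linarith [horder i k (hik i hi k hk) t ht]
    have hev : ∀ᶠ t in atTop, ψ t ≤ c₀ := by
      have hall : ∀ᶠ t in atTop, ∀ i ∈ A, ∀ k ∈ Aᶜ,
          PhiCS β (x t k - x t i) ≤ PhiCS β (L k i + 1) := by
        rw [eventually_all_finset]
        intro i hi
        rw [eventually_all_finset]
        intro k hk
        have h1 : ∀ᶠ t in atTop, x t k - x t i ≤ L k i + 1 :=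
          (hL k i).eventually_le_const (lt_add_one _)
        filter_upwards [h1, eventually_ge_atTop (0:ℝ)] with t h1 ht
        exact phiCS_mono hβ (sub_pos.2 (horder i k (hik i hi k hk) t ht)) h1
      filter_upwards [hall] with t hall
      have : ∑ i ∈ A, ∑ k ∈ Aᶜ, PhiCS β (x t k - x t i)
          ≤ ∑ i ∈ A, ∑ k ∈ Aᶜ, PhiCS β (L k i + 1) :=
        Finset.sum_le_sum fun i hi => Finset.sum_le_sum fun k hk => hall i hi k hk
      have hκN : 0 ≤ κ / (N:ℝ) := le_of_lt (div_pos hκ hN0)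
      simp only [hψ, hc₀]
      nlinarith [mul_le_mul_of_nonneg_left this hκN]
    -- c₀ is nonnegative
    have h0c : 0 ≤ c₀ := by
      by_contra hneg
      push_neg at hneg
      obtain ⟨T₀, hT₀⟩ := eventually_atTop.1 hev
      set T : ℝ := max T₀ 1 with hT
      have hT1 : (1:ℝ) ≤ T := le_max_right _ _
      have hT0 : (0:ℝ) < T := by linarith
      have hmono : MonotoneOn (fun t => c₀ * t - S t) (Ici T) := by
        apply monotoneOn_of_deriv_nonneg (convex_Ici T)
        · apply ContinuousOn.sub
          · exact (continuous_const.mul continuous_id).continuousOn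
          · intro t ht
            exact ((hSder t (by have := mem_Ici.1 ht; linarith)).continuousWithinAt).mono
              (Ici_subset_Ici.2 (by linarith [mem_Ici.1 ht]))
        · intro t ht
          rw [interior_Ici] at ht
          have ht0 : (0:ℝ) < t := lt_trans hT0 ht
          have hd : HasDerivAt (fun u => c₀ * u - S u) (c₀ - ψ t) t := by
            simpa using (((hasDerivAt_id t).const_mul c₀).fun_sub
              ((hSder t ht0.le).hasDerivAt (Ici_mem_nhds ht0)))
          exact hd.differentiableAt.differentiableWithinAt
        · intro t ht
          rw [interior_Ici] at ht
          have ht0 : (0:ℝ) < t := lt_trans hT0 ht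
          have hd : HasDerivAt (fun u => c₀ * u - S u) (c₀ - ψ t) t := by
            simpa using (((hasDerivAt_id t).const_mul c₀).fun_sub
              ((hSder t ht0.le).hasDerivAt (Ici_mem_nhds ht0)))
          rw [hd.deriv]
          have : ψ t ≤ c₀ := hT₀ t (le_trans (le_max_left _ _) (le_of_lt ht))
          linarith
      have hbot : Tendsto S atTop atBot := by
        have h1 : Tendsto (fun t : ℝ => c₀ * t) atTop atBot :=
          (tendsto_const_mul_atBot_of_neg hneg).2 tendsto_id
        have h2 := tendsto_atBot_add_const_left atTop (S T) h1
        have h3 := tendsto_atBot_add_const_right atTop (-(c₀ * T)) h2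
        have hlin : Tendsto (fun t : ℝ => S T + c₀ * t - c₀ * T) atTop atBot :=
          h3.congr fun t => by ring
        apply tendsto_atBot_mono' atTop ?_ hlin
        filter_upwards [eventually_ge_atTop T] with t ht
        have := hmono self_mem_Ici (mem_Ici.2 ht) ht
        dsimp at this
        linarith
      exact not_tendsto_atBot_of_tendsto_nhds hLS hbot
    -- strict bound on c₀
    have hClt : ∑ i ∈ A, ∑ k ∈ Aᶜ, PhiCS β (L k i + 1)
        < (m : ℝ) * (((N:ℝ) - m) * (1 / (β - 1))) := by
      have h1 : ∀ i ∈ A, ∑ k ∈ Aᶜ, PhiCS β (L k i + 1) < (Aᶜ.card : ℝ) * (1 / (β - 1)) := by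
        intro i hi
        calc ∑ k ∈ Aᶜ, PhiCS β (L k i + 1) < ∑ _k ∈ Aᶜ, (1 / (β - 1)) := by
              apply Finset.sum_lt_sum_of_nonempty hAcNe
              intro k hk
              exact phiCS_lt hβ (by linarith [hLpos i hi k hk])
          _ = (Aᶜ.card : ℝ) * (1 / (β - 1)) := by
              rw [Finset.sum_const, nsmul_eq_mul]
      calc ∑ i ∈ A, ∑ k ∈ Aᶜ, PhiCS β (L k i + 1)
          < ∑ _i ∈ A, (Aᶜ.card : ℝ) * (1 / (β - 1)) :=
            Finset.sum_lt_sum_of_nonempty hANe h1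
        _ = (A.card : ℝ) * ((Aᶜ.card : ℝ) * (1 / (β - 1))) := by
            rw [Finset.sum_const, nsmul_eq_mul]
        _ = (m : ℝ) * (((N:ℝ) - m) * (1 / (β - 1))) := by
            rw [hcardA, hcardAc]
            congr 2
            rw [Nat.cast_sub hmN']
    -- conclude the inequality for this l
    have hP : 0 < ∑ i ∈ A, ν i + (κ / (N:ℝ)) * ((m : ℝ) * (((N:ℝ) - m) * (1 / (β - 1)))) := by
      have := mul_lt_mul_of_pos_left hClt (div_pos hκ hN0)
      simp only [hc₀] at h0c
      linarith
    have hW : ∑ i ∈ A, ν i = ∑ i : Fin N, if (i:ℕ) < m then ν i else 0 := by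
      rw [Finset.sum_filter]
    set W : ℝ := ∑ i : Fin N, if (i:ℕ) < m then ν i else 0 with hWdef
    rw [hW] at hP
    have hmR : ((l:ℕ):ℝ) + 1 = (m:ℝ) := by push_cast [hm]; ring
    rw [hmR]
    have hm0 : (0:ℝ) < (m:ℝ) := by positivity
    have hNm : (0:ℝ) < (N:ℝ) - (m:ℝ) := by
      have : (m:ℝ) < (N:ℝ) := by exact_mod_cast Nat.lt_of_le_of_lt hmN (by omega)
      linarith
    rw [div_lt_iff₀ (by positivity)]
    have hNe : (N:ℝ) ≠ 0 := ne_of_gt hN0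
    have hbe : β - 1 ≠ 0 := ne_of_gt hβ1
    have h3 : (N:ℝ) * (β - 1) * (-(κ / (N:ℝ) * ((m:ℝ) * (((N:ℝ) - (m:ℝ)) * (1 / (β - 1))))))
        = -(κ * ((m:ℝ) * ((N:ℝ) - (m:ℝ)))) := by
      field_simp
    have h4 : -(κ * ((m:ℝ) * ((N:ℝ) - (m:ℝ)))) < (N:ℝ) * (β - 1) * W := by
      rw [← h3]
      exact mul_lt_mul_of_pos_left (by linarith) (by positivity)
    nlinarith
  -- take the supremum
  haveI hinst : Nonempty (Fin (N - 1)) := ⟨⟨0, by omega⟩⟩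
  obtain ⟨l₀, hl₀⟩ :=
    Finite.exists_max (fun l : Fin (N - 1) =>
      (-((N:ℝ) * (β - 1) * ∑ i : Fin N, if (i:ℕ) < (l:ℕ) + 1 then ν i else 0)) /
        ((((l:ℕ):ℝ) + 1) * ((N:ℝ) - (((l:ℕ):ℝ) + 1))))
  exact lt_of_le_of_lt (ciSup_le hl₀) (key l₀)
end
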